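/- arXiv:1102.4985 — 10 statements merged into one kernel-verified Lean document; each statement's English description precedes it below -/
import Mathlib

section
/- Let F be a commutative ring, k ∈ N, and y : N^k → F a vertex model with partition function f_y. For every graph G = (V,E), every subset U ⊆ V with |U| = k+1, and every map s : U → V, we have Σ_{π ∈ S_U} sgn(π) · f_y(G_{s∘π}) = 0, where G_t denotes the graph obtained from G by adding the edges {u t(u) : u ∈ U} (possibly creating multiple edges or loops). -/
structure MGraph : Type 1 where
  V : Type
  E : Type
  [fintV : Fintype V]
  [fintE : Fintype E]
  [decV : DecidableEq V]
  [decE : DecidableEq E]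
  ends : E → V × V

attribute [instance] MGraph.fintV MGraph.fintE MGraph.decV MGraph.decE

namespace MGraph

/-- multiplicity with which vertex `v` occurs among the endpoints of edge `e`
(a loop counts twice). -/
def inc (G : MGraph) (v : G.V) (e : G.E) : ℕ :=
  (if (G.ends e).1 = v then 1 else 0) + (if (G.ends e).2 = v then 1 else 0)

/-- `κ(δ(v))` : the incidence vector in `ℕ^k` of the multiset of colors seen at `v`. -/
def degVec (G : MGraph) {k : ℕ} (κ : G.E → Fin k) (v : G.V) : Fin k → ℕ :=
  fun c => ∑ e : G.E, if κ e = c then G.inc v e else 0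

/-- the partition function of the `k`-color vertex model `y`. -/
def pf {F : Type} [CommRing F] (k : ℕ) (y : (Fin k → ℕ) → F) (G : MGraph) : F :=
  ∑ κ : G.E → Fin k, ∏ v : G.V, y (G.degVec κ v)

def empty : MGraph where
  V := Empty
  E := Empty
  ends := Empty.elim

def disjUnion (G H : MGraph) : MGraph where
  V := G.V ⊕ H.V
  E := G.E ⊕ H.E
  ends := Sum.elim (fun e => (Sum.inl (G.ends e).1, Sum.inl (G.ends e).2))
    (fun e => (Sum.inr (H.ends e).1, Sum.inr (H.ends e).2))

/-- `G_t` : add the edges `{u t(u) | u ∈ U}`. -/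
def addEdges (G : MGraph) (U : Finset G.V) (t : {v // v ∈ U} → G.V) : MGraph where
  V := G.V
  E := G.E ⊕ {v // v ∈ U}
  ends := Sum.elim G.ends (fun u => (u.1, t u))

/-- `G/t` : add the edges `{u t(u) | u ∈ U}` and contract them. -/
noncomputable def contract (G : MGraph) (U : Finset G.V) (t : {v // v ∈ U} → G.V) : MGraph :=
  letI s : Setoid G.V := Relation.EqvGen.setoid (fun a b => ∃ h : a ∈ U, t ⟨a, h⟩ = b)
  letI : DecidableEq (Quotient s) := Classical.decEq _
  letI : Fintype (Quotient s) := Fintype.ofSurjective (Quotient.mk s)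
    (fun q => Quot.exists_rep q)
  { V := Quotient s
    E := G.E
    ends := fun e => (Quotient.mk s (G.ends e).1, Quotient.mk s (G.ends e).2) }

/-- isomorphism of multigraphs. -/
structure Iso (G H : MGraph) where
  vEquiv : G.V ≃ H.V
  eEquiv : G.E ≃ H.E
  ends_eq : ∀ e, H.ends (eEquiv e) = Prod.map vEquiv vEquiv (G.ends e) ∨
    H.ends (eEquiv e) = (Prod.map vEquiv vEquiv (G.ends e)).swap

end MGraph

/-- signed sum of partition function values over edge additions on a
set of `k+1` vertices vanishes. -/
theorem pf_signed_addEdges_eq_zero {F : Type} [CommRing F] (k : ℕ) (y : (Fin k → ℕ) → F)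
    (G : MGraph) (U : Finset G.V) (hU : U.card = k + 1) (s : {v // v ∈ U} → G.V) :
    ∑ π : Equiv.Perm {v // v ∈ U},
      ((Equiv.Perm.sign π : ℤ) : F) * MGraph.pf k y (G.addEdges U (s ∘ π)) = 0 := by
  classical
  simp only [MGraph.pf, Finset.mul_sum]
  have hrw : ∀ π : Equiv.Perm {v // v ∈ U},
      (∑ κ : (G.addEdges U (s ∘ ⇑π)).E → Fin k,
        ((Equiv.Perm.sign π : ℤ) : F) * ∏ w, y ((G.addEdges U (s ∘ ⇑π)).degVec κ w))
      = ∑ κ : G.E ⊕ {v // v ∈ U} → Fin k,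
        ((Equiv.Perm.sign π : ℤ) : F) * ∏ w, y ((G.addEdges U (s ∘ ⇑π)).degVec κ w) :=
    fun _ => rfl
  simp only [hrw]
  rw [Finset.sum_comm]
  apply Finset.sum_eq_zero
  intro κ _
  obtain ⟨u, v, huv, hk⟩ : ∃ u v : {v // v ∈ U}, u ≠ v ∧ κ (Sum.inr u) = κ (Sum.inr v) := by
    have hcard : Fintype.card (Fin k) < Fintype.card {v // v ∈ U} := by
      simp [hU]
    obtain ⟨a, b, hab, h⟩ := Fintype.exists_ne_map_eq_of_card_lt
      (fun w : {v // v ∈ U} => κ (Sum.inr w)) hcard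
    exact ⟨a, b, hab, h⟩
  have hκsw : ∀ u', κ (Sum.inr (Equiv.swap u v u')) = κ (Sum.inr u') := by
    intro u'
    rcases eq_or_ne u' u with rfl | h1
    · rw [Equiv.swap_apply_left, ← hk]
    rcases eq_or_ne u' v with rfl | h2
    · rw [Equiv.swap_apply_right, hk]
    · rw [Equiv.swap_apply_of_ne_of_ne h1 h2]
  have hdeg : ∀ (π : Equiv.Perm {v // v ∈ U}) (w : G.V),
      (G.addEdges U (s ∘ ⇑(π * Equiv.swap u v))).degVec κ w
        = (G.addEdges U (s ∘ ⇑π)).degVec κ w := by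
    intro π w
    funext c
    show (∑ e : G.E ⊕ {v // v ∈ U}, if κ e = c then (G.addEdges U (s ∘ ⇑(π * Equiv.swap u v))).inc w e else 0) = ∑ e : G.E ⊕ {v // v ∈ U}, if κ e = c then (G.addEdges U (s ∘ ⇑π)).inc w e else 0
    simp only [MGraph.degVec, MGraph.addEdges, MGraph.inc, Fintype.sum_sum_type,
      Sum.elim_inl, Sum.elim_inr]
    congr 1
    have split : ∀ (t : {v // v ∈ U} → G.V),
        (∑ u' : {v // v ∈ U}, if κ (Sum.inr u') = c then
          ((if (u' : G.V) = w then 1 else 0) + (if t u' = w then 1 else 0)) else 0)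
        = (∑ u' : {v // v ∈ U},
            if κ (Sum.inr u') = c then (if (u' : G.V) = w then 1 else 0) else 0)
        + ∑ u' : {v // v ∈ U},
            if κ (Sum.inr u') = c then (if t u' = w then 1 else 0) else 0 := by
      intro t
      rw [← Finset.sum_add_distrib]
      apply Finset.sum_congr rfl
      intro u' _
      split <;> simp
    refine (split (s ∘ ⇑(π * Equiv.swap u v))).trans (Eq.trans ?_ (split (s ∘ ⇑π)).symm)
    congr 1
    simp only [Function.comp_apply]
    rw [← Equiv.sum_comp (Equiv.swap u v)
      (fun u' => if κ (Sum.inr u') = c then (if s (π u') = w then 1 else 0) else 0)]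
    apply Finset.sum_congr rfl
    intro u' _
    rw [hκsw]
    rfl
  apply Finset.sum_ninvolution (fun π => π * Equiv.swap u v)
  · intro π
    have hsgn : (Equiv.Perm.sign (π * Equiv.swap u v) : ℤ) = -(Equiv.Perm.sign π : ℤ) := by
      simp [Equiv.Perm.sign_swap huv]
    have hprod : (∏ w, y ((G.addEdges U (s ∘ ⇑(π * Equiv.swap u v))).degVec κ w))
        = ∏ w, y ((G.addEdges U (s ∘ ⇑π)).degVec κ w) := by
      apply Finset.prod_congr rfl
      intro w _
      exact congrArg y (hdeg π w)
    rw [hprod, hsgn]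
    push_cast
    ring
  · intro π _
    intro h
    apply huv
    have h2 : π * Equiv.swap u v = π * 1 := by rw [h, mul_one]
    have : Equiv.swap u v = 1 := mul_left_cancel h2
    simpa [Equiv.swap_eq_one_iff] using this
  · intro π; exact Finset.mem_univ _
  · intro π
    rw [mul_assoc, Equiv.swap_mul_self, mul_one]
end

section
/- Let F be a commutative ring, k, r ∈ N, and y : N^k → F a vertex model whose moment matrix M_y = (y_{α+β})_{α,β ∈ N^k} has rank at most r. Then for every graph G = (V,E), every U ⊆ V with |U| = r+1, and every s : U → V \ U, we have Σ_{π ∈ S_U} sgn(π) · f_y(G/(s∘π)) = 0, where G/t is obtained from G by adding the edges {u t(u) : u ∈ U} and contracting them. -/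
namespace MGraph

section Aux

variable (G : MGraph) (U : Finset G.V) (t : {v // v ∈ U} → G.V)

def proj : G.V → G.V := fun v => if h : v ∈ U then t ⟨v, h⟩ else v

variable {G U t}

lemma proj_of_not_mem {v : G.V} (h : v ∉ U) : proj G U t v = v := dif_neg h

lemma proj_of_mem {v : G.V} (h : v ∈ U) : proj G U t v = t ⟨v, h⟩ := dif_pos h

variable (ht : ∀ u, t u ∉ U)
include ht

lemma proj_not_mem (v : G.V) : proj G U t v ∉ U := by
  by_cases h : v ∈ U
  · rw [proj_of_mem h]; exact ht _
  · rw [proj_of_not_mem h]; exact h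

lemma eqvGen_iff {a b : G.V} :
    Relation.EqvGen (fun a b => ∃ h : a ∈ U, t ⟨a, h⟩ = b) a b ↔
      proj G U t a = proj G U t b := by
  constructor
  · intro h
    induction h with
    | rel a b hab =>
      obtain ⟨ha, rfl⟩ := hab
      rw [proj_of_mem ha, proj_of_not_mem (ht _)]
    | refl => rfl
    | symm _ _ _ ih => exact ih.symm
    | trans _ _ _ _ _ ih1 ih2 => exact ih1.trans ih2
  · intro h
    have key : ∀ v : G.V, Relation.EqvGen
        (fun a b => ∃ h : a ∈ U, t ⟨a, h⟩ = b) v (proj G U t v) := by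
      intro v
      by_cases hv : v ∈ U
      · rw [proj_of_mem hv]; exact Relation.EqvGen.rel _ _ ⟨hv, rfl⟩
      · rw [proj_of_not_mem hv]; exact Relation.EqvGen.refl v
    exact ((key a).trans _ _ _ (h ▸ (key b).symm _ _))

noncomputable def quotEquiv : (G.contract U t).V ≃ {v : G.V // v ∉ U} where
  toFun := Quotient.lift (fun v => (⟨proj G U t v, proj_not_mem ht v⟩ : {v : G.V // v ∉ U}))
    (fun a b hab => by
      apply Subtype.ext
      exact (eqvGen_iff ht).1 hab)
  invFun := fun w => Quotient.mk _ w.1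
  left_inv := by
    refine Quotient.ind (fun v => ?_)
    exact Quotient.sound ((eqvGen_iff ht).2 (proj_of_not_mem (proj_not_mem ht v)))
  right_inv := fun w => Subtype.ext (proj_of_not_mem w.2)

lemma quotEquiv_symm_apply (w : {v : G.V // v ∉ U}) :
    (quotEquiv ht).symm w = Quotient.mk _ w.1 := rfl

lemma contract_mk_eq_iff {a : G.V} {w : G.V} (hw : w ∉ U) :
    (Quotient.mk (Relation.EqvGen.setoid (fun a b => ∃ h : a ∈ U, t ⟨a, h⟩ = b)) a
      = Quotient.mk _ w) ↔ proj G U t a = w := by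
  rw [Quotient.eq]
  show Relation.EqvGen _ a w ↔ _
  rw [eqvGen_iff ht, proj_of_not_mem hw]

lemma pf_contract {F : Type} [CommRing F] (k : ℕ) (y : (Fin k → ℕ) → F) :
    pf k y (G.contract U t) = ∑ κ : G.E → Fin k, ∏ w : {v : G.V // v ∉ U},
      y (fun c => ∑ v : G.V, if proj G U t v = w.1 then G.degVec κ v c else 0) := by
  show ∑ κ : G.E → Fin k, ∏ v : (G.contract U t).V, y ((G.contract U t).degVec κ v) = _
  refine Finset.sum_congr rfl (fun κ _ => ?_)
  rw [← Fintype.prod_equiv ((quotEquiv ht).symm) _ _ (fun w => rfl)]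
  refine Fintype.prod_congr _ _ (fun w => ?_)
  congr 1
  funext c
  rw [quotEquiv_symm_apply]
  show (∑ e : G.E, if κ e = c then (G.contract U t).inc (Quotient.mk _ w.1) e else 0) = _
  have hinc : ∀ e : G.E, (G.contract U t).inc (Quotient.mk _ w.1) e =
      (if proj G U t (G.ends e).1 = w.1 then 1 else 0) +
      (if proj G U t (G.ends e).2 = w.1 then 1 else 0) := by
    intro e
    unfold MGraph.inc
    have h1 : ((G.contract U t).ends e).1 =
      (Quotient.mk _ (G.ends e).1 : (G.contract U t).V) := rfl
    have h2 : ((G.contract U t).ends e).2 =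
      (Quotient.mk _ (G.ends e).2 : (G.contract U t).V) := rfl
    rw [h1, h2]
    congr 1
    · by_cases h : proj G U t (G.ends e).1 = w.1
      · simp only [h, contract_mk_eq_iff ht w.2, ↓reduceIte]
        exact if_pos ((contract_mk_eq_iff ht w.2).2 h)
      · simp only [h, contract_mk_eq_iff ht w.2, ↓reduceIte]
        exact if_neg (fun hq => h ((contract_mk_eq_iff ht w.2).1 hq))
    · by_cases h : proj G U t (G.ends e).2 = w.1
      · simp only [h, contract_mk_eq_iff ht w.2, ↓reduceIte]
        exact if_pos ((contract_mk_eq_iff ht w.2).2 h)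
      · simp only [h, contract_mk_eq_iff ht w.2, ↓reduceIte]
        exact if_neg (fun hq => h ((contract_mk_eq_iff ht w.2).1 hq))
  -- rhs: swap sums
  have hsingle : ∀ a : G.V,
      (∑ v : G.V, if proj G U t v = w.1 then (if a = v then 1 else 0) else 0)
        = (if proj G U t a = w.1 then 1 else 0) := by
    intro a
    rw [Finset.sum_eq_single a]
    · simp
    · intro b _ hb
      simp [Ne.symm hb]
    · simp
  have hsplit : ∀ (f g : G.V → ℕ),
      (∑ v : G.V, if proj G U t v = w.1 then f v + g v else 0) =
        (∑ v : G.V, if proj G U t v = w.1 then f v else 0) +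
          ∑ v : G.V, if proj G U t v = w.1 then g v else 0 := by
    intro f g
    rw [← Finset.sum_add_distrib]
    exact Finset.sum_congr rfl (fun v _ => by split <;> simp)
  calc (∑ e : G.E, if κ e = c then (G.contract U t).inc (Quotient.mk _ w.1) e else 0)
      = ∑ e : G.E, ∑ v : G.V, (if proj G U t v = w.1 then
          (if κ e = c then G.inc v e else 0) else 0) := by
        refine Finset.sum_congr rfl (fun e _ => ?_)
        by_cases hc : κ e = c
        · rw [if_pos hc, hinc e]
          symm
          simp only [if_pos hc]
          unfold MGraph.inc
          rw [hsplit, hsingle, hsingle]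
        · simp [hc]
    _ = _ := by
        rw [Finset.sum_comm]
        refine Finset.sum_congr rfl (fun v _ => ?_)
        by_cases hv : proj G U t v = w.1
        · simp only [if_pos hv]; rfl
        · simp [hv]

end Aux

end MGraph

/-- if all `(r+1) × (r+1)` minors of the moment matrix of `y` vanish
(i.e. the moment matrix has rank at most `r`), then the signed sum of partition
function values over contractions on a set of `r+1` vertices vanishes. -/
theorem pf_signed_contract_eq_zero {F : Type} [CommRing F] (k r : ℕ) (y : (Fin k → ℕ) → F)
    (hrank : ∀ α β : Fin (r + 1) → (Fin k → ℕ),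
      (Matrix.of fun i j => y (α i + β j)).det = 0)
    (G : MGraph) (U : Finset G.V) (hU : U.card = r + 1)
    (s : {v // v ∈ U} → G.V) (hs : ∀ u, s u ∉ U) :
    ∑ π : Equiv.Perm {v // v ∈ U},
      ((Equiv.Perm.sign π : ℤ) : F) * MGraph.pf k y (G.contract U (s ∘ π)) = 0 := by
  classical
  by_cases hinj : Function.Injective s
  · -- the injective case : reduce to vanishing of minors
    have ht : ∀ π : Equiv.Perm {v // v ∈ U}, ∀ u, (s ∘ ⇑π) u ∉ U := fun π u => hs (π u)
    set S : {v // v ∈ U} → {v : G.V // v ∉ U} := fun u => ⟨s u, hs u⟩ with hSdef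
    have hSinj : Function.Injective S := fun a b hab =>
      hinj (congrArg Subtype.val hab)
    set C : (G.E → Fin k) → F :=
      fun κ => ∏ w ∈ (Finset.univ.image S)ᶜ, y (G.degVec κ w.1) with hCdef
    set M : (G.E → Fin k) → Matrix {v // v ∈ U} {v // v ∈ U} F :=
      fun κ => Matrix.of fun u u' => y (G.degVec κ (s u) + G.degVec κ u'.1) with hMdef
    have hprod : ∀ (π : Equiv.Perm {v // v ∈ U}) (κ : G.E → Fin k),
        (∏ w : {v : G.V // v ∉ U},
          y (fun c => ∑ v : G.V, if MGraph.proj G U (s ∘ ⇑π) v = w.1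
            then G.degVec κ v c else 0)) = C κ * ∏ u : {v // v ∈ U}, M κ u (π⁻¹ u) := by
      intro π κ
      rw [← Finset.prod_mul_prod_compl (Finset.univ.image S), mul_comm]
      congr 1
      · -- the part away from the image of S
        refine Finset.prod_congr rfl (fun w hw => ?_)
        rw [Finset.mem_compl] at hw
        congr 1
        funext c
        rw [Finset.sum_eq_single w.1]
        · rw [if_pos (MGraph.proj_of_not_mem w.2)]
        · intro b _ hb
          by_cases hbU : b ∈ U
          · refine if_neg (fun hcon => ?_)
            rw [MGraph.proj_of_mem hbU] at hcon
            exact hw (Finset.mem_image.2 ⟨π ⟨b, hbU⟩, Finset.mem_univ _,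
              Subtype.ext hcon⟩)
          · exact if_neg (fun hcon => hb ((MGraph.proj_of_not_mem hbU) ▸ hcon))
        · intro h; exact absurd (Finset.mem_univ _) h
      · -- the part on the image of S
        rw [Finset.prod_image (fun a _ b _ hab => hSinj hab)]
        refine Finset.prod_congr rfl (fun u _ => ?_)
        show y _ = y _
        congr 1
        funext c
        have hfilter : Finset.univ.filter (fun v => MGraph.proj G U (s ∘ ⇑π) v = (S u).1)
            = {s u, ((π⁻¹ u : {v // v ∈ U}) : G.V)} := by
          ext v
          simp only [Finset.mem_filter, Finset.mem_univ, true_and, Finset.mem_insert,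
            Finset.mem_singleton]
          constructor
          · intro h
            by_cases hv : v ∈ U
            · rw [MGraph.proj_of_mem hv] at h
              have : π ⟨v, hv⟩ = u := hinj h
              right
              have : (⟨v, hv⟩ : {v // v ∈ U}) = π⁻¹ u := by
                rw [← this]; simp
              exact congrArg Subtype.val this
            · left; rw [MGraph.proj_of_not_mem hv] at h; exact h
          · rintro (rfl | rfl)
            · exact MGraph.proj_of_not_mem (hs u)
            · have hv : ((π⁻¹ u : {v // v ∈ U}) : G.V) ∈ U := (π⁻¹ u).2
              rw [MGraph.proj_of_mem hv]
              show s (π ⟨_, hv⟩) = s u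
              congr 1
              have : (⟨((π⁻¹ u : {v // v ∈ U}) : G.V), hv⟩ : {v // v ∈ U}) = π⁻¹ u :=
                Subtype.ext rfl
              rw [this]; simp
        have hne2 : s u ≠ ((π⁻¹ u : {v // v ∈ U}) : G.V) := by
          intro hcon
          exact hs u (hcon ▸ (π⁻¹ u).2)
        calc (∑ v : G.V, if MGraph.proj G U (s ∘ ⇑π) v = (S u).1
                then G.degVec κ v c else 0)
            = ∑ v ∈ Finset.univ.filter
                (fun v => MGraph.proj G U (s ∘ ⇑π) v = (S u).1), G.degVec κ v c := by
              rw [Finset.sum_filter]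
          _ = G.degVec κ (s u) c + G.degVec κ ((π⁻¹ u : {v // v ∈ U}) : G.V) c := by
              rw [hfilter, Finset.sum_pair hne2]
          _ = (G.degVec κ (s u) + G.degVec κ ((π⁻¹ u : {v // v ∈ U}) : G.V)) c := rfl
    have h1 : ∀ π : Equiv.Perm {v // v ∈ U},
        ((Equiv.Perm.sign π : ℤ) : F) * MGraph.pf k y (G.contract U (s ∘ ⇑π))
          = ∑ κ : G.E → Fin k, ((Equiv.Perm.sign π : ℤ) : F) *
              (C κ * ∏ u : {v // v ∈ U}, M κ u (π⁻¹ u)) := by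
      intro π
      rw [MGraph.pf_contract (ht π) k y, Finset.mul_sum]
      exact Finset.sum_congr rfl (fun κ _ => by rw [hprod π κ])
    rw [Finset.sum_congr rfl (fun π _ => h1 π), Finset.sum_comm]
    refine Finset.sum_eq_zero (fun κ _ => ?_)
    have hdet : (M κ).det = 0 := by
      have e : {v // v ∈ U} ≃ Fin (r + 1) :=
        Fintype.equivFinOfCardEq (by rw [Fintype.card_coe, hU])
      rw [← Matrix.det_submatrix_equiv_self e.symm (M κ)]
      exact hrank (fun i => G.degVec κ (s (e.symm i)))
        (fun j => G.degVec κ ((e.symm j : {v // v ∈ U}) : G.V))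
    calc ∑ π : Equiv.Perm {v // v ∈ U}, ((Equiv.Perm.sign π : ℤ) : F) *
            (C κ * ∏ u : {v // v ∈ U}, M κ u (π⁻¹ u))
        = C κ * ∑ π : Equiv.Perm {v // v ∈ U}, ((Equiv.Perm.sign π : ℤ) : F) *
            ∏ i : {v // v ∈ U}, M κ (π i) i := by
          rw [Finset.mul_sum]
          refine Finset.sum_congr rfl (fun π _ => ?_)
          have : (∏ u : {v // v ∈ U}, M κ u (π⁻¹ u))
              = ∏ i : {v // v ∈ U}, M κ (π i) i := by
            rw [← Equiv.prod_comp π (fun u => M κ u (π⁻¹ u))]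
            exact Fintype.prod_congr _ _ (fun i => by rw [Equiv.Perm.inv_def, Equiv.symm_apply_apply])
          rw [this]; ring
      _ = C κ * (M κ).det := by rw [Matrix.det_apply']
      _ = 0 := by rw [hdet, mul_zero]
  · -- the non-injective case : pair up permutations with opposite signs
    rw [Function.not_injective_iff] at hinj
    obtain ⟨u1, u2, heq, hne⟩ := hinj
    set σ : Equiv.Perm {v // v ∈ U} := Equiv.swap u1 u2 with hσdef
    refine Finset.sum_involution (fun π _ => σ * π) ?_ ?_ (fun π _ => Finset.mem_univ _) ?_
    · intro π _
      have hsσ : s ∘ ⇑(σ * π) = s ∘ ⇑π := by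
        funext v
        show s (σ (π v)) = s (π v)
        rcases eq_or_ne (π v) u1 with h | h
        · rw [h, hσdef, Equiv.swap_apply_left, ← heq]
        · rcases eq_or_ne (π v) u2 with h2 | h2
          · rw [h2, hσdef, Equiv.swap_apply_right, heq]
          · rw [hσdef, Equiv.swap_apply_of_ne_of_ne h h2]
      have hsign : ((Equiv.Perm.sign (σ * π) : ℤ) : F)
          = -((Equiv.Perm.sign π : ℤ) : F) := by
        rw [map_mul, hσdef, Equiv.Perm.sign_swap hne]
        push_cast
        ring
      rw [hsσ, hsign]
      ring
    · intro π _ _ hcon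
      rw [mul_eq_right] at hcon
      have h1 : σ u1 = u2 := Equiv.swap_apply_left u1 u2
      rw [hcon] at h1
      exact hne h1
    · intro π _
      show σ * (σ * π) = π
      rw [← mul_assoc, hσdef, Equiv.swap_mul_self, one_mul]
end

section
/- The graph parameter f(G) = (-1)^{|E(G)|} is the partition function of a 1-color vertex model over the complex numbers, namely y : N → C with y_n = i^n (i the imaginary unit), but there is no vertex model y : N^k → R over the reals (for any k) whose partition function equals f. -/
/-- a single edge. -/
def edgeGraph : MGraph where
  V := Bool
  E := Unit
  ends := fun _ => (false, true)

/-- `(-1)^{|E(G)|}` is the partition function of the 1-color vertex model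
`y_n = i^n` over `ℂ`, but of no vertex model over `ℝ`. -/
theorem neg_one_pow_edges_complex_not_real :
    (∀ G : MGraph, MGraph.pf 1 (fun n => Complex.I ^ n 0) G
        = (-1 : ℂ) ^ Fintype.card G.E) ∧
      ¬ ∃ (k : ℕ) (y : (Fin k → ℕ) → ℝ),
          ∀ G : MGraph, MGraph.pf k y G = (-1 : ℝ) ^ Fintype.card G.E := by
  constructor
  · intro G
    rw [MGraph.pf, Fintype.sum_unique]
    have hd : ∀ v : G.V, G.degVec (default : G.E → Fin 1) v 0 = ∑ e : G.E, G.inc v e := by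
      intro v
      simp [MGraph.degVec, eq_iff_true_of_subsingleton]
    simp only [hd]
    rw [Finset.prod_pow_eq_pow_sum]
    have h2 : ∀ e : G.E, ∑ v : G.V, G.inc v e = 2 := by
      intro e
      unfold MGraph.inc
      rw [Finset.sum_add_distrib]
      simp
    rw [Finset.sum_comm]
    simp only [h2]
    rw [Finset.sum_const, Finset.card_univ, smul_eq_mul, pow_mul', Complex.I_sq]
  · rintro ⟨k, y, hy⟩
    have h := hy edgeGraph
    have key : (0:ℝ) ≤ MGraph.pf k y edgeGraph := by
      rw [MGraph.pf]
      apply Finset.sum_nonneg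
      intro κ _
      have hd : edgeGraph.degVec κ false = edgeGraph.degVec κ true := by
        funext c
        simp [MGraph.degVec, MGraph.inc, edgeGraph]
      have hp : ∏ v : edgeGraph.V, y (edgeGraph.degVec κ v)
          = y (edgeGraph.degVec κ true) * y (edgeGraph.degVec κ false) :=
        Fintype.prod_bool _
      rw [hp, hd]
      exact mul_self_nonneg _
    rw [h] at key
    have hc : Fintype.card edgeGraph.E = 1 := rfl
    rw [hc] at key
    norm_num at key
end

section
/- Fix k, n ∈ N and an algebraically closed field F of characteristic 0. Define μ : O(Sym F^{n×n}) → FG_n by μ(Π_{ij∈E} x_{i,j}) = G for each graph G = ([n],E); define τ : O(Sym F^{n×n}) → O(F^{k×n}) by τ(q)(z) = q(z^T z); define σ : O(F^{k×n}) → R_n by σ(Π_{j=1}^n Π_{i=1}^k z_{i,j}^{α(i,j)}) = Π_{j=1}^n y_{α_j}, where α_j is the j-th column of α. Then p ∘ μ = σ ∘ τ, where p(G)(y) = f_y(G). -/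
set_option linter.unusedVariables false

open MvPolynomial

/-- the polynomial ring `R = F[y_α : α ∈ ℕ^k]`. -/
abbrev PolyR (F : Type) [CommRing F] (k : ℕ) : Type := MvPolynomial (Fin k → ℕ) F

/-- the partition function of `G` as a polynomial in the variables `y_α`, i.e.
`p(G)(y) = f_y(G)`. -/
noncomputable def pPoly (F : Type) [CommRing F] (k : ℕ) (G : MGraph) : PolyR F k :=
  ∑ κ : G.E → Fin k, ∏ v : G.V, X (G.degVec κ v)

/-- the linear extension of `p` to formal linear combinations of graphs. -/
noncomputable def pLin (F : Type) [CommRing F] (k : ℕ) : (MGraph →₀ F) →ₗ[F] PolyR F k :=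
  Finsupp.linearCombination F (pPoly F k)

/-- the substitution action of a matrix `g` on `F[x_1,…,x_k]` : `x_i ↦ ∑_j g_{j i} x_j`. -/
noncomputable def substAct {F : Type} [CommRing F] {k : ℕ}
    (g : Matrix (Fin k) (Fin k) F) :
    MvPolynomial (Fin k) F →ₐ[F] MvPolynomial (Fin k) F :=
  aeval (fun i => ∑ j, C (g j i) * X j)

/-- the linear map `F[x_1,…,x_k] → R` sending the monomial `x^α` to the variable `y_α`. -/
noncomputable def monToVar (F : Type) [CommRing F] (k : ℕ)
    (q : MvPolynomial (Fin k) F) : PolyR F k :=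
  ∑ d ∈ q.support, C (q.coeff d) * X (⇑d : Fin k → ℕ)

/-- the action of a matrix `g` on `R = F[y_α]` induced from the substitution action on
`F[x_1,…,x_k]` via the identification `y_α ↔ x^α`. -/
noncomputable def gAct {F : Type} [CommRing F] {k : ℕ}
    (g : Matrix (Fin k) (Fin k) F) : PolyR F k →ₐ[F] PolyR F k :=
  aeval (fun α : Fin k → ℕ => monToVar F k (substAct g (∏ i, X i ^ α i)))

/-- `O_k`-invariance of an element of `R`. -/
def OkInvariant {F : Type} [CommRing F] {k : ℕ} (q : PolyR F k) : Prop :=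
  ∀ g : Matrix (Fin k) (Fin k) F, g.transpose * g = 1 → gAct g q = q

/-- `τ : O(Sym F^{n×n}) → O(F^{k×n})`, `τ(q)(z) = q(zᵀz)` : the algebra map sending the
coordinate `x_{ij}` to `∑_h z_{h,i} z_{h,j}`. -/
noncomputable def tauMap (F : Type) [CommRing F] (k n : ℕ) :
    MvPolynomial (Sym2 (Fin n)) F →ₐ[F] MvPolynomial (Fin k × Fin n) F :=
  aeval (fun s => Sym2.lift
    ⟨fun i j => ∑ h : Fin k, X (h, i) * X (h, j),
      fun i j => Finset.sum_congr rfl (fun h _ => mul_comm _ _)⟩ s)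

/-- the multigraph on vertex set `[n]` whose edge multiset is given by the exponent
vector `d` of a monomial in the variables `x_{ij}`. -/
noncomputable def graphOf (n : ℕ) (d : Sym2 (Fin n) →₀ ℕ) : MGraph where
  V := Fin n
  E := (s : Sym2 (Fin n)) × Fin (d s)
  ends := fun e => (Quot.out e.1 : Fin n × Fin n)

/-- `μ : O(Sym F^{n×n}) → FG_n`, sending the monomial `∏_{ij ∈ E} x_{ij}` to the graph
`([n], E)` (with multiplicities). -/
noncomputable def muMap (F : Type) [CommRing F] (n : ℕ) :
    MvPolynomial (Sym2 (Fin n)) F →ₗ[F] (MGraph →₀ F) :=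
  (MvPolynomial.basisMonomials (Sym2 (Fin n)) F).constr F
    (fun d => Finsupp.single (graphOf n d) (1 : F))

/-- `σ : O(F^{k×n}) → R`, sending the monomial with exponent matrix `α` to
`∏_{j=1}^n y_{α_j}` (`α_j` the `j`-th column of `α`). -/
noncomputable def sigmaMap (F : Type) [CommRing F] (k n : ℕ) :
    MvPolynomial (Fin k × Fin n) F →ₗ[F] PolyR F k :=
  (MvPolynomial.basisMonomials (Fin k × Fin n) F).constr F
    (fun β => ∏ j : Fin n, X (fun i => β (i, j)))

/-- the diagram commutes: `p ∘ μ = σ ∘ τ`. -/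
theorem pLin_comp_muMap_eq_sigmaMap_comp_tauMap
    (F : Type) [Field F] [IsAlgClosed F] [CharZero F] (k n : ℕ) :
    (pLin F k).comp (muMap F n) =
      (sigmaMap F k n).comp (tauMap F k n).toLinearMap := by
  classical
  apply (MvPolynomial.basisMonomials (Sym2 (Fin n)) F).ext
  intro d
  have hbd : (MvPolynomial.basisMonomials (Sym2 (Fin n)) F) d = monomial d (1 : F) := by
    rw [MvPolynomial.coe_basisMonomials]
  rw [LinearMap.comp_apply, LinearMap.comp_apply]
  have hmu : muMap F n ((MvPolynomial.basisMonomials (Sym2 (Fin n)) F) d)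
      = Finsupp.single (graphOf n d) (1 : F) :=
    Module.Basis.constr_basis _ F _ d
  rw [hmu]
  have hpl : pLin F k (Finsupp.single (graphOf n d) (1 : F)) = pPoly F k (graphOf n d) := by
    simp [pLin]
  rw [hpl, AlgHom.toLinearMap_apply, hbd]
  -- rewrite the monomial as a product over the edges of `graphOf n d`
  have hmon : (monomial d (1 : F))
      = ∏ e : (s : Sym2 (Fin n)) × Fin (d s), X e.1 := by
    rw [MvPolynomial.monomial_eq, map_one, one_mul,
      Finsupp.prod_fintype _ _ (fun s => pow_zero _), ← Finset.univ_sigma_univ,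
      Finset.prod_sigma]
    simp
  rw [hmon, map_prod]
  have hlift : ∀ s : Sym2 (Fin n), tauMap F k n (X s)
      = ∑ h : Fin k, X (R := F) (h, (Quot.out s).1) * X (h, (Quot.out s).2) := by
    intro s
    conv_lhs => rw [← Quot.out_eq s]
    simp only [tauMap, aeval_X]
    exact Sym2.lift_mk _ _ _
  rw [Finset.prod_congr rfl (fun e _ => hlift e.1), Finset.prod_univ_sum, map_sum]
  rw [show (Fintype.piFinset fun _ : (s : Sym2 (Fin n)) × Fin (d s) =>
      (Finset.univ : Finset (Fin k))) = Finset.univ from Fintype.piFinset_univ]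
  unfold pPoly
  refine Finset.sum_congr rfl fun κ _ => ?_
  -- each summand: a single monomial
  have hprodmon : ∏ e : (s : Sym2 (Fin n)) × Fin (d s),
        X (R := F) (κ e, (Quot.out e.1).1) * X (κ e, (Quot.out e.1).2)
      = monomial (∑ e : (s : Sym2 (Fin n)) × Fin (d s),
          (Finsupp.single (κ e, (Quot.out e.1).1) 1
            + Finsupp.single (κ e, (Quot.out e.1).2) 1)) (1 : F) := by
    rw [MvPolynomial.monomial_sum_one]
    refine Finset.prod_congr rfl fun e _ => ?_
    rw [MvPolynomial.X, MvPolynomial.X, MvPolynomial.monomial_mul, one_mul]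
  rw [hprodmon]
  set β : (Fin k × Fin n) →₀ ℕ := ∑ e : (s : Sym2 (Fin n)) × Fin (d s),
      (Finsupp.single (κ e, (Quot.out e.1).1) 1
        + Finsupp.single (κ e, (Quot.out e.1).2) 1) with hβ
  have hsig : sigmaMap F k n (monomial β (1 : F))
      = ∏ j : Fin n, X (fun i => β (i, j)) := by
    have : (monomial β (1 : F))
        = (MvPolynomial.basisMonomials (Fin k × Fin n) F) β := by
      rw [MvPolynomial.coe_basisMonomials]
    rw [this]
    exact Module.Basis.constr_basis _ F _ β
  rw [hsig]
  refine (Finset.prod_congr rfl fun j _ => ?_).symm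
  congr 1
  funext i
  have hβa : β (i, j) = ∑ e : (s : Sym2 (Fin n)) × Fin (d s),
      ((Finsupp.single (κ e, (Quot.out e.1).1) 1 : (Fin k × Fin n) →₀ ℕ) (i, j)
        + (Finsupp.single (κ e, (Quot.out e.1).2) 1 : (Fin k × Fin n) →₀ ℕ) (i, j)) := by
    rw [hβ]
    rw [Finsupp.finset_sum_apply]
    exact Finset.sum_congr rfl fun e _ => Finsupp.add_apply _ _ _
  rw [MGraph.degVec, hβa]
  refine Finset.sum_congr rfl fun e _ => ?_
  simp only [MGraph.inc, graphOf, Finsupp.single_apply, Prod.mk.injEq]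
  by_cases hκ : κ e = i <;> simp [hκ, eq_comm] <;> grind
end

section
/- If f : G → F satisfies the rank-r contraction conditions (for every graph G = (V,E), U ⊆ V with |U| = r+1, and s : U → V\U: Σ_{π∈S_U} sgn(π) f(G/(s∘π)) = 0), then f satisfies the (k = r)-color conditions: for every graph G = (V,E), U ⊆ V with |U| = r+1, and s : U → V, Σ_{π∈S_U} sgn(π) f(G_{s∘π}) = 0. -/
namespace MGraphAux

open MGraph

/-- `G` with a pendant vertex and edge attached at each vertex of `U`. -/
def pend (G : MGraph) (U : Finset G.V) : MGraph where
  V := G.V ⊕ {v // v ∈ U}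
  E := G.E ⊕ {v // v ∈ U}
  ends := Sum.elim (fun e => (Sum.inl (G.ends e).1, Sum.inl (G.ends e).2))
    (fun u => (Sum.inl u.1, Sum.inr u))

/-- the set of pendant vertices. -/
def pendU (G : MGraph) (U : Finset G.V) : Finset (pend G U).V :=
  Finset.univ.map ⟨Sum.inr, Sum.inr_injective⟩

lemma mem_pendU {G : MGraph} {U : Finset G.V} (w : (pend G U).V) :
    w ∈ pendU G U ↔ ∃ u : {v // v ∈ U}, Sum.inr u = w := by
  exact Finset.mem_map.trans ⟨fun ⟨a, _, h⟩ => ⟨a, h⟩, fun ⟨a, h⟩ => ⟨a, Finset.mem_univ _, h⟩⟩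

/-- identification of the pendant vertex set with `U`. -/
def pendEquiv (G : MGraph) (U : Finset G.V) : {w // w ∈ pendU G U} ≃ {v // v ∈ U} where
  toFun w := match w with
    | ⟨Sum.inr u, _⟩ => u
    | ⟨Sum.inl _, h⟩ => absurd h (fun h => by obtain ⟨a, _, ha⟩ := Finset.mem_map.1 h; cases ha)
  invFun u := ⟨Sum.inr u, Finset.mem_map_of_mem _ (Finset.mem_univ u)⟩
  left_inv w := match w with
    | ⟨Sum.inr u, _⟩ => rfl
    | ⟨Sum.inl _, h⟩ => absurd h (fun h => by obtain ⟨a, _, ha⟩ := Finset.mem_map.1 h; cases ha)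
  right_inv u := rfl

/-- contracting the pendant edges with moved ends gives `addEdges`. -/
noncomputable def contractPendIso (G : MGraph) (U : Finset G.V) (t : {v // v ∈ U} → G.V) :
    MGraph.Iso ((pend G U).contract (pendU G U)
      (fun w => Sum.inl (t (pendEquiv G U w)))) (G.addEdges U t) := by
  classical
  set t' : {w // w ∈ pendU G U} → (pend G U).V :=
    fun w => Sum.inl (t (pendEquiv G U w)) with ht'
  letI sd : Setoid (pend G U).V :=
    Relation.EqvGen.setoid (fun a b => ∃ h : a ∈ pendU G U, t' ⟨a, h⟩ = b)
  let g : (pend G U).V → G.V := Sum.elim id t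
  have hR : ∀ a b, (∃ h : a ∈ pendU G U, t' ⟨a, h⟩ = b) → g a = g b := by
    rintro a b ⟨h, hb⟩
    rcases a with v | u
    · exact absurd h (fun h => by obtain ⟨a, _, ha⟩ := Finset.mem_map.1 h; cases ha)
    · subst hb; rfl
  have hg : ∀ a b, sd.r a b → g a = g b := by
    intro a b hab
    induction hab with
    | rel a b h => exact hR a b h
    | refl a => rfl
    | symm a b _ ih => exact ih.symm
    | trans a b c _ _ ih1 ih2 => exact ih1.trans ih2
  refine ⟨?_, Equiv.refl _, ?_⟩
  · exact
    { toFun := Quotient.lift g hg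
      invFun := fun v => Quotient.mk sd (Sum.inl v)
      left_inv := by
        rintro ⟨x⟩
        rcases x with v | u
        · rfl
        · exact Quotient.sound
            (Relation.EqvGen.symm _ _ (Relation.EqvGen.rel _ _ ⟨Finset.mem_map_of_mem _ (Finset.mem_univ u), rfl⟩))
      right_inv := fun v => rfl }
  · rintro (e | u)
    · exact Or.inl rfl
    · exact Or.inl rfl

end MGraphAux

/-- the rank-`r` contraction conditions imply the `(k = r)`-color
edge-addition conditions, for any isomorphism-invariant graph parameter. -/
theorem contract_conditions_imply_addEdges_conditions {F : Type} [CommRing F]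
    (r : ℕ) (f : MGraph → F)
    (hiso : ∀ G H : MGraph, Nonempty (G.Iso H) → f G = f H)
    (hcontr : ∀ (G : MGraph) (U : Finset G.V), U.card = r + 1 →
      ∀ s : {v // v ∈ U} → G.V, (∀ u, s u ∉ U) →
        ∑ π : Equiv.Perm {v // v ∈ U},
          ((Equiv.Perm.sign π : ℤ) : F) * f (G.contract U (s ∘ π)) = 0) :
    ∀ (G : MGraph) (U : Finset G.V), U.card = r + 1 → ∀ s : {v // v ∈ U} → G.V,
      ∑ π : Equiv.Perm {v // v ∈ U},
        ((Equiv.Perm.sign π : ℤ) : F) * f (G.addEdges U (s ∘ π)) = 0 := by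
  classical
  intro G U hcard s
  have hcard' : (MGraphAux.pendU G U).card = r + 1 := by
    simp [MGraphAux.pendU, hcard]
  set s'' : {w // w ∈ MGraphAux.pendU G U} → (MGraphAux.pend G U).V :=
    fun w => Sum.inl (s (MGraphAux.pendEquiv G U w)) with hs''
  have hnot : ∀ w, s'' w ∉ MGraphAux.pendU G U := by
    intro w
    exact fun h => by obtain ⟨a, _, ha⟩ := Finset.mem_map.1 h; cases ha
  have h := hcontr (MGraphAux.pend G U) (MGraphAux.pendU G U) hcard' s'' hnot
  let e := Equiv.permCongr (MGraphAux.pendEquiv G U)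
  refine Eq.trans ?_ h
  refine (Fintype.sum_equiv e _ _ ?_).symm
  intro π'
  have hsgn : Equiv.Perm.sign (e π') = Equiv.Perm.sign π' := Equiv.Perm.sign_permCongr _ _
  rw [hsgn]
  congr 1
  have hfun : (s'' ∘ π') = fun w => Sum.inl ((s ∘ (e π')) (MGraphAux.pendEquiv G U w)) := by
    funext w
    simp [hs'', e, Equiv.permCongr_apply, Function.comp_apply]
    rfl
  rw [hfun]
  exact hiso _ _ ⟨MGraphAux.contractPendIso G U (s ∘ (e π'))⟩
end

section
/- The graph parameter f(G) := 2^{(number of loops of G)} is multiplicative and satisfies, for k = 1, the condition Σ_{π∈S_U} sgn(π) f(G_{s∘π}) = 0 for all graphs G = (V,E), all U ⊆ V with |U| = 2, and all s : U → V with s(U) ∩ U = ∅; yet f is not the partition function of any 1-color vertex model over C. -/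
section Aux

/-- one vertex with one loop -/
def Lgraph : MGraph := { V := Unit, E := Unit, ends := fun _ => ((), ()) }

/-- two vertices joined by two parallel edges -/
def Dgraph : MGraph := { V := Bool, E := Bool, ends := fun _ => (false, true) }

noncomputable def floops (G : MGraph) : ℂ :=
  2 ^ (Fintype.card {e : G.E // (G.ends e).1 = (G.ends e).2})

end Aux


/-- `f(G) = 2^{#loops}` is multiplicative and satisfies the `k = 1`
signed edge-addition condition for maps `s` with `s(U) ∩ U = ∅`, yet is not the
partition function of any 1-color vertex model over `ℂ`. -/
theorem two_pow_loops_counterexample :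
    letI f : MGraph → ℂ :=
      fun G => 2 ^ (Fintype.card {e : G.E // (G.ends e).1 = (G.ends e).2})
    (f MGraph.empty = 1 ∧ ∀ G H : MGraph, f (G.disjUnion H) = f G * f H) ∧
    (∀ (G : MGraph) (U : Finset G.V), U.card = 2 →
      ∀ s : {v // v ∈ U} → G.V, (∀ u, s u ∉ U) →
        ∑ π : Equiv.Perm {v // v ∈ U},
          ((Equiv.Perm.sign π : ℤ) : ℂ) * f (G.addEdges U (s ∘ π)) = 0) ∧
    ¬ ∃ y : (Fin 1 → ℕ) → ℂ, ∀ G : MGraph, f G = MGraph.pf 1 y G := by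
  refine ⟨⟨?_, ?_⟩, ?_, ?_⟩
  · show floops MGraph.empty = 1
    rw [floops, Fintype.card_eq_zero_iff.mpr ⟨fun e => Empty.elim e.1⟩, pow_zero]
  · intro G H
    show floops (G.disjUnion H) = floops G * floops H
    rw [floops, floops, floops, ← pow_add]
    congr 1
    rw [← Fintype.card_sum]
    apply Fintype.card_congr
    refine Equiv.subtypeSum.trans (Equiv.sumCongr (Equiv.subtypeEquivRight ?_)
      (Equiv.subtypeEquivRight ?_)) <;>
      intro e <;> simp [MGraph.disjUnion]
  · intro G U hU s hs
    show ∑ π : Equiv.Perm {v // v ∈ U},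
          ((Equiv.Perm.sign π : ℤ) : ℂ) * floops (G.addEdges U (s ∘ π)) = 0
    have hconst : ∀ π : Equiv.Perm {v // v ∈ U},
        floops (G.addEdges U (s ∘ π)) = floops G := by
      intro π
      rw [floops, floops]
      congr 1
      apply Fintype.card_congr
      haveI : IsEmpty {u : {v // v ∈ U} // False} := ⟨fun u => u.2⟩
      refine (Equiv.subtypeSum.trans (Equiv.sumCongr (Equiv.subtypeEquivRight ?_)
        (Equiv.subtypeEquivRight (q := fun _ => False) ?_))).trans (Equiv.sumEmpty _ _)
      · intro e; simp [MGraph.addEdges]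
      · intro u
        simp only [MGraph.addEdges, Sum.elim_inr, Function.comp_apply, iff_false]
        intro h; exact absurd (h ▸ u.2) (hs (π u))
    simp_rw [hconst]
    rw [← Finset.sum_mul]
    obtain ⟨a, b, hab, hUab⟩ := Finset.card_eq_two.mp hU
    have ha : a ∈ U := by simp [hUab]
    have hb : b ∈ U := by simp [hUab]
    have hxy : (⟨a, ha⟩ : {v // v ∈ U}) ≠ ⟨b, hb⟩ := by
      simp [Subtype.ext_iff, hab]
    set τ := Equiv.swap (⟨a, ha⟩ : {v // v ∈ U}) ⟨b, hb⟩ with hτ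
    have hS : ∑ π : Equiv.Perm {v // v ∈ U}, ((Equiv.Perm.sign π : ℤ) : ℂ) = 0 := by
      have h1 : ∑ π : Equiv.Perm {v // v ∈ U}, ((Equiv.Perm.sign (τ * π) : ℤ) : ℂ)
          = ∑ π : Equiv.Perm {v // v ∈ U}, ((Equiv.Perm.sign π : ℤ) : ℂ) :=
        Fintype.sum_equiv (Equiv.mulLeft τ) _ _ (fun π => rfl)
      have h2 : ∀ π : Equiv.Perm {v // v ∈ U},
          ((Equiv.Perm.sign (τ * π) : ℤ) : ℂ) = -((Equiv.Perm.sign π : ℤ) : ℂ) := by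
        intro π
        rw [Equiv.Perm.sign_mul, hτ, Equiv.Perm.sign_swap hxy]
        push_cast
        ring
      simp_rw [h2] at h1
      rw [Finset.sum_neg_distrib] at h1
      linear_combination -h1 / 2
    rw [hS, zero_mul]
  · show ¬ ∃ y : (Fin 1 → ℕ) → ℂ, ∀ G : MGraph, floops G = MGraph.pf 1 y G
    rintro ⟨y, hy⟩
    have hL := hy Lgraph
    have hD := hy Dgraph
    have hfL : floops Lgraph = 2 := by
      rw [floops]
      norm_num [show Fintype.card {e : Lgraph.E // (Lgraph.ends e).1 = (Lgraph.ends e).2} = 1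
        from by decide]
    have hfD : floops Dgraph = 1 := by
      rw [floops]
      norm_num [show Fintype.card {e : Dgraph.E // (Dgraph.ends e).1 = (Dgraph.ends e).2} = 0
        from by decide]
    haveI : Unique Lgraph.V := ⟨⟨()⟩, fun _ => rfl⟩
    have hL1 : ∀ (v : Lgraph.V) (c : Fin 1),
        Lgraph.degVec (default : Lgraph.E → Fin 1) v c = 2 := by decide
    have hpL : MGraph.pf 1 y Lgraph = y (fun _ => 2) := by
      rw [MGraph.pf, Fintype.sum_unique, Fintype.prod_unique]
      congr 1
      funext c
      exact hL1 _ c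
    have h1 : ∀ v : Dgraph.V, Dgraph.degVec (default : Dgraph.E → Fin 1) v
        = fun _ => 2 := by
      intro v
      funext c
      show Dgraph.degVec default v c = 2
      revert v c
      decide
    have hpD : MGraph.pf 1 y Dgraph = y (fun _ => 2) * y (fun _ => 2) := by
      rw [MGraph.pf, Fintype.sum_unique]
      simp only [h1]
      show ∏ _v : Bool, y (fun _ => 2) = _
      rw [Fintype.prod_bool]
    rw [hfL, hpL] at hL
    rw [hfD, hpD, ← hL] at hD
    norm_num at hD
end

section
/- The graph parameter f(G) := 2^{|V(G)|} is the partition function of the 1-color vertex model y : N → C with y_n = 2 for all n, whose moment matrix has rank 1; yet there exist a graph G = (V,E), a set U ⊆ V with |U| = 2, and a map s : U → V with s(U) ∩ U ≠ ∅ such that Σ_{π∈S_U} sgn(π) f(G/(s∘π)) ≠ 0. -/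
section Helpers

lemma eqvGen_of_sub_eq {α : Type*} {r : α → α → Prop} (h : ∀ a b, r a b → a = b) :
    ∀ a b, Relation.EqvGen r a b → a = b := by
  intro a b hab
  induction hab with
  | rel a b h' => exact h a b h'
  | refl a => rfl
  | symm a b _ ih => exact ih.symm
  | trans a b c _ _ ih1 ih2 => exact ih1.trans ih2

lemma card_quotient_of_sub_eq {α : Type} [Fintype α] (r : α → α → Prop)
    (h : ∀ a b, r a b → a = b)
    [F : Fintype (Quotient (Relation.EqvGen.setoid r))] :
    Fintype.card (Quotient (Relation.EqvGen.setoid r)) = Fintype.card α := by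
  refine (Fintype.card_of_bijective
    (f := Quotient.mk (Relation.EqvGen.setoid r)) ⟨?_, ?_⟩).symm
  · intro a b hab
    exact eqvGen_of_sub_eq h a b (Quotient.exact hab)
  · exact fun q => Quot.exists_rep q

lemma card_quotient_bool_one (r : Bool → Bool → Prop) (h : r false true)
    [F : Fintype (Quotient (Relation.EqvGen.setoid r))] :
    Fintype.card (Quotient (Relation.EqvGen.setoid r)) = 1 := by
  rw [Fintype.card_eq_one_iff]
  refine ⟨Quotient.mk _ false, Quotient.ind fun a => ?_⟩
  cases a
  · rfl
  · exact Quotient.sound (Relation.EqvGen.symm _ _ (Relation.EqvGen.rel _ _ h))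

def Gex : MGraph := { V := Bool, E := Empty, ends := Empty.elim }

end Helpers


/-- `f(G) = 2^{|V(G)|}` is the partition function of the constant
1-color vertex model `y ≡ 2`, whose moment matrix has rank at most 1 (all `2 × 2`
minors vanish); yet the signed contraction condition fails for some `s` with
`s(U) ∩ U ≠ ∅`. -/
theorem two_pow_vertices_counterexample :
    letI f : MGraph → ℂ := fun G => 2 ^ (Fintype.card G.V)
    letI y : (Fin 1 → ℕ) → ℂ := fun _ => 2
    (∀ G : MGraph, f G = MGraph.pf 1 y G) ∧
    (∀ α β : Fin 2 → (Fin 1 → ℕ), (Matrix.of fun i j => y (α i + β j)).det = 0) ∧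
    ∃ (G : MGraph) (U : Finset G.V) (s : {v // v ∈ U} → G.V),
      U.card = 2 ∧ (∃ u, s u ∈ U) ∧
      ∑ π : Equiv.Perm {v // v ∈ U},
        ((Equiv.Perm.sign π : ℤ) : ℂ) * f (G.contract U (s ∘ π)) ≠ 0 := by
  refine ⟨?_, ?_, ?_⟩
  · intro G
    simp [MGraph.pf, Finset.prod_const, Finset.card_univ]
  · intro α β
    simp [Matrix.det_fin_two]
  · refine ⟨Gex, (Finset.univ : Finset Bool), Subtype.val, ?_, ?_, ?_⟩
    · decide
    · exact ⟨⟨false, Finset.mem_univ _⟩, Finset.mem_univ _⟩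
    · set u0 : {v : Bool // v ∈ (Finset.univ : Finset Bool)} := ⟨false, Finset.mem_univ _⟩
      set u1 : {v : Bool // v ∈ (Finset.univ : Finset Bool)} := ⟨true, Finset.mem_univ _⟩
      have hcases : ∀ u : {v : Bool // v ∈ (Finset.univ : Finset Bool)}, u = u0 ∨ u = u1 := by
        rintro ⟨(_|_), hu⟩
        · exact Or.inl rfl
        · exact Or.inr rfl
      have hne : u0 ≠ u1 := by intro h; exact Bool.noConfusion (congrArg Subtype.val h : false = true)
      have hswap : ∀ π : Equiv.Perm {v : Bool // v ∈ (Finset.univ : Finset Bool)},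
          π ≠ 1 → π = Equiv.swap u0 u1 := by
        intro π hπ
        have h0 : π u0 = u1 := by
          rcases hcases (π u0) with h | h
          · exfalso
            apply hπ
            have h1 : π u1 = u1 := by
              rcases hcases (π u1) with h' | h'
              · exact absurd (π.injective (h.trans h'.symm)) hne
              · exact h'
            refine Equiv.ext fun u => ?_
            rcases hcases u with rfl | rfl
            · exact h
            · exact h1
          · exact h
        have h1 : π u1 = u0 := by
          rcases hcases (π u1) with h' | h'
          · exact h'
          · exact absurd (π.injective (h0.trans h'.symm)) hne
        refine Equiv.ext fun u => ?_
        rcases hcases u with rfl | rfl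
        · rw [Equiv.swap_apply_left]; exact h0
        · rw [Equiv.swap_apply_right]; exact h1
      have hc1 : Fintype.card (Gex.contract Finset.univ (Subtype.val ∘ ⇑(1 : Equiv.Perm {v : Bool // v ∈ (Finset.univ : Finset Bool)}))).V = 2 := by
        have := @card_quotient_of_sub_eq Bool _
          (fun a b : Bool => ∃ h : a ∈ (Finset.univ : Finset Bool),
            (Subtype.val ∘ ⇑(1 : Equiv.Perm {v : Bool // v ∈ (Finset.univ : Finset Bool)})) ⟨a, h⟩ = b)
          (by rintro a b ⟨h, rfl⟩; rfl)
          (Gex.contract Finset.univ (Subtype.val ∘ ⇑(1 : Equiv.Perm {v : Bool // v ∈ (Finset.univ : Finset Bool)}))).fintV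
        exact this.trans Fintype.card_bool
      have hc2 : Fintype.card (Gex.contract Finset.univ (Subtype.val ∘ ⇑(Equiv.swap u0 u1))).V = 1 := by
        have := @card_quotient_bool_one
          (fun a b : Bool => ∃ h : a ∈ (Finset.univ : Finset Bool),
            (Subtype.val ∘ ⇑(Equiv.swap u0 u1)) ⟨a, h⟩ = b)
          ⟨Finset.mem_univ _, by
            show (Equiv.swap u0 u1 u0).1 = true
            exact congrArg Subtype.val (Equiv.swap_apply_left u0 u1)⟩
          (Gex.contract Finset.univ (Subtype.val ∘ ⇑(Equiv.swap u0 u1))).fintV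
        exact this
      have hval : ∀ π : Equiv.Perm {v : Bool // v ∈ (Finset.univ : Finset Bool)},
          ((Equiv.Perm.sign π : ℤ) : ℂ) *
            2 ^ (Fintype.card (Gex.contract Finset.univ (Subtype.val ∘ ⇑π)).V)
            = if π = 1 then 4 else -2 := by
        intro π
        by_cases h : π = 1
        · subst h
          rw [if_pos rfl, hc1]
          norm_num
        · rw [if_neg h, hswap π h, hc2]
          have hs : Equiv.Perm.sign (Equiv.swap u0 u1) = -1 := Equiv.Perm.sign_swap hne
          rw [hs]
          norm_num
      have hsum : ∑ π : Equiv.Perm {v : Bool // v ∈ (Finset.univ : Finset Bool)},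
          ((Equiv.Perm.sign π : ℤ) : ℂ) *
            2 ^ (Fintype.card (Gex.contract Finset.univ (Subtype.val ∘ ⇑π)).V)
          = 2 := by
        rw [Finset.sum_congr rfl (fun π _ => hval π)]
        have h6 : ∀ π : Equiv.Perm {v : Bool // v ∈ (Finset.univ : Finset Bool)},
            (if π = 1 then (4:ℂ) else -2) = (if π = 1 then (6:ℂ) else 0) + (-2) := by
          intro π; split <;> norm_num
        rw [Finset.sum_congr rfl (fun π _ => h6 π), Finset.sum_add_distrib,
          Finset.sum_ite_eq' Finset.univ (1 : Equiv.Perm {v : Bool // v ∈ (Finset.univ : Finset Bool)})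
            (fun _ => (6:ℂ)), Finset.sum_const]
        have hcard : Fintype.card (Equiv.Perm {v : Bool // v ∈ (Finset.univ : Finset Bool)}) = 2 := by
          rw [Fintype.card_perm,
            Fintype.card_congr (Equiv.subtypeUnivEquiv (fun x : Bool => Finset.mem_univ x))]
          simp [Nat.factorial]
        rw [if_pos (Finset.mem_univ _), Finset.card_univ, hcard]
        norm_num
      show (∑ π : Equiv.Perm {v : Bool // v ∈ (Finset.univ : Finset Bool)},
          ((Equiv.Perm.sign π : ℤ) : ℂ) *
            2 ^ (Fintype.card (Gex.contract Finset.univ (Subtype.val ∘ ⇑π)).V)) ≠ 0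
      rw [hsum]
      norm_num
end

section
/- Let y : N^k → C be a vertex model whose moment matrix M_y = (y_{α+β})_{α,β∈N^k} has rank at most r. Then for every l ∈ N, the connection matrix C_{f_y,l} = (f_y(GH))_{G,H ∈ G_l} has rank at most r^l. -/
/-- an `l`-labeled multigraph. -/
structure LGraph (l : ℕ) : Type 1 where
  G : MGraph
  lab : Fin l → G.V
  inj : Function.Injective lab

/-- glue two `l`-labeled graphs by identifying equally labeled vertices. -/
noncomputable def LGraph.glue {l : ℕ} (G H : LGraph l) : MGraph :=
  letI s : Setoid (G.G.V ⊕ H.G.V) := Relation.EqvGen.setoid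
    (fun a b => ∃ i : Fin l, a = Sum.inl (G.lab i) ∧ b = Sum.inr (H.lab i))
  letI : DecidableEq (Quotient s) := Classical.decEq _
  letI : Fintype (Quotient s) := Fintype.ofSurjective (Quotient.mk s)
    (fun q => Quot.exists_rep q)
  { V := Quotient s
    E := G.G.E ⊕ H.G.E
    ends := Sum.elim
      (fun e => (Quotient.mk s (Sum.inl (G.G.ends e).1), Quotient.mk s (Sum.inl (G.G.ends e).2)))
      (fun e => (Quotient.mk s (Sum.inr (H.G.ends e).1), Quotient.mk s (Sum.inr (H.G.ends e).2))) }

open Matrix in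
lemma exists_col_det_ne_zero {B : Type} : ∀ {n : ℕ} {v : Fin n → (B → ℂ)},
    LinearIndependent ℂ v → ∃ b : Fin n → B, (Matrix.of fun i j => v i (b j)).det ≠ 0 := by
  intro n
  induction n with
  | zero =>
    intro v _
    exact ⟨Fin.elim0, by simp [Matrix.det_fin_zero]⟩
  | succ n ih =>
    intro v hv
    obtain ⟨b, hb⟩ := ih (hv.comp Fin.castSucc (Fin.castSucc_injective n))
    by_contra hcon
    push_neg at hcon
    set c : Fin (n+1) → ℂ := fun i => (-1 : ℂ)^((i : ℕ) + n) *
      (Matrix.of fun p q : Fin n => v (i.succAbove p) (b q)).det with hc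
    have hcomb : ∀ x : B, ∑ i, c i * v i x = 0 := by
      intro x
      have h0 := hcon (Fin.snoc b x)
      rw [Matrix.det_succ_column _ (Fin.last n)] at h0
      rw [← h0]
      apply Finset.sum_congr rfl
      intro i _
      simp only [Matrix.of_apply, Fin.snoc_last, Fin.val_last, hc]
      have hm : ((Matrix.of fun (i' j : Fin (n+1)) => v i' ((Fin.snoc b x : Fin (n+1) → B) j)).submatrix i.succAbove
          (Fin.last n).succAbove)
          = (Matrix.of fun p q : Fin n => v (i.succAbove p) (b q)) := by
        ext p q
        rw [Matrix.submatrix_apply]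
        simp [Fin.succAbove_last, Fin.snoc_castSucc]
      rw [hm]
      ring
    have hzero : ∑ i, c i • v i = 0 := by
      funext x
      simpa using hcomb x
    have hlast := Fintype.linearIndependent_iff.mp hv c hzero (Fin.last n)
    rw [hc] at hlast
    simp only [Fin.val_last] at hlast
    apply hb
    have hpow : ((-1 : ℂ))^(n + n) ≠ 0 := pow_ne_zero _ (by norm_num)
    have hdet0 : (Matrix.of fun p q : Fin n => v ((Fin.last n).succAbove p) (b q)).det = 0 := by
      by_contra h
      exact (mul_ne_zero hpow h) hlast
    have hm2 : (Matrix.of fun i j => (v ∘ Fin.castSucc) i (b j)) =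
        Matrix.of fun p q : Fin n => v ((Fin.last n).succAbove p) (b q) := by
      ext p q
      simp [Fin.succAbove_last]
    rw [hm2]
    exact hdet0

lemma exists_factorization {A1 A2 : Type} (r : ℕ) (M : A1 → A2 → ℂ)
    (h : ∀ (α : Fin (r+1) → A1) (β : Fin (r+1) → A2),
      (Matrix.of fun i j => M (α i) (β j)).det = 0) :
    ∃ (ι : Type) (_ : Fintype ι) (u : A1 → ι → ℂ) (v : A2 → ι → ℂ),
      Fintype.card ι ≤ r ∧ ∀ a b2, M a b2 = ∑ t, u a t * v b2 t := by
  classical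
  set ρ : A1 → (A2 → ℂ) := fun a b2 => M a b2 with hρ
  obtain ⟨bs, hbs_sub, hbs_span, hbs_ind⟩ := exists_linearIndependent ℂ (Set.range ρ)
  have hnoemb : ¬ Nonempty (Fin (r+1) ↪ ↥bs) := by
    rintro ⟨w⟩
    have hw : LinearIndependent ℂ (fun i : Fin (r+1) => ((w i : ↥bs) : A2 → ℂ)) :=
      hbs_ind.comp w w.injective
    have hsel : ∀ i : Fin (r+1), ∃ a : A1, ρ a = ((w i : ↥bs) : A2 → ℂ) := by
      intro i
      exact hbs_sub (w i).2
    choose a ha using hsel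
    obtain ⟨β, hβ⟩ := exists_col_det_ne_zero hw
    apply hβ
    have : (Matrix.of fun i j => ((w i : ↥bs) : A2 → ℂ) (β j)) =
        (Matrix.of fun i j => M (a i) (β j)) := by
      ext i j
      exact (congrFun (ha i) (β j)).symm
    rw [this]
    exact h a β
  have hfin : Finite ↥bs := by
    by_contra hinf
    rw [not_finite_iff_infinite] at hinf
    exact hnoemb ⟨(Fin.valEmbedding.trans (Infinite.natEmbedding ↥bs))⟩
  letI : Fintype ↥bs := Fintype.ofFinite _
  have hcard : Fintype.card ↥bs ≤ r := by
    by_contra hlt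
    push_neg at hlt
    apply hnoemb
    rw [Function.Embedding.nonempty_iff_card_le]
    simpa using hlt
  have hmem : ∀ a : A1, ρ a ∈ Submodule.span ℂ (Set.range ((↑) : ↥bs → (A2 → ℂ))) := by
    intro a
    rw [Subtype.range_coe, hbs_span]
    exact Submodule.subset_span ⟨a, rfl⟩
  have hrep : ∀ a : A1, ∃ c : ↥bs → ℂ, ∑ x, c x • ((x : ↥bs) : A2 → ℂ) = ρ a := by
    intro a
    exact (Submodule.mem_span_range_iff_exists_fun ℂ).mp (hmem a)
  choose u hu using hrep
  refine ⟨↥bs, inferInstance, u, fun b2 x => ((x : ↥bs) : A2 → ℂ) b2, hcard, ?_⟩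
  intro a b2
  have := congrFun (hu a) b2
  simp only [Finset.sum_apply, Pi.smul_apply, smul_eq_mul] at this
  exact this.symm

lemma det_eq_zero_of_factor {n : ℕ} {ι : Type} [Fintype ι] (hlt : Fintype.card ι < n)
    (f g : Fin n → ι → ℂ) :
    (Matrix.of fun i j : Fin n => ∑ t, f i t * g j t).det = 0 := by
  classical
  have heq : (Matrix.of fun i j : Fin n => ∑ t, f i t * g j t) =
      (Matrix.of fun (i : Fin n) (t : ι) => f i t) *
        (Matrix.of fun (t : ι) (j : Fin n) => g j t) := by
    ext i j
    simp [Matrix.mul_apply]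
  by_contra hdet
  have hunit : IsUnit (Matrix.of fun i j : Fin n => ∑ t, f i t * g j t).det := Ne.isUnit hdet
  have hr := Matrix.rank_of_isUnit _ ((Matrix.isUnit_iff_isUnit_det _).mpr hunit)
  rw [heq] at hr
  have h1 := Matrix.rank_mul_le_left (Matrix.of fun (i : Fin n) (t : ι) => f i t)
    (Matrix.of fun (t : ι) (j : Fin n) => g j t)
  have h2 := Matrix.rank_le_card_width (Matrix.of fun (i : Fin n) (t : ι) => f i t)
  rw [hr] at h1
  simp only [Fintype.card_fin] at h1
  omega


namespace LGraph
variable {l : ℕ} (G H : LGraph l)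

def glueSetoid : Setoid (G.G.V ⊕ H.G.V) :=
  Relation.EqvGen.setoid
    (fun a b => ∃ i : Fin l, a = Sum.inl (G.lab i) ∧ b = Sum.inr (H.lab i))

def mkG (v : G.G.V) : (G.glue H).V := Quotient.mk (glueSetoid G H) (Sum.inl v)

def mkH (w : H.G.V) : (G.glue H).V := Quotient.mk (glueSetoid G H) (Sum.inr w)

noncomputable def nf : (G.G.V ⊕ H.G.V) → (G.G.V ⊕ H.G.V) :=
  Sum.elim Sum.inl
    (fun w => if h : ∃ i, H.lab i = w then Sum.inl (G.lab h.choose) else Sum.inr w)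

lemma nf_inl (v : G.G.V) : nf G H (Sum.inl v) = Sum.inl v := rfl

lemma nf_inr_lab (t : Fin l) : nf G H (Sum.inr (H.lab t)) = Sum.inl (G.lab t) := by
  simp only [nf, Sum.elim_inl, Sum.elim_inr]
  have h : ∃ i, H.lab i = H.lab t := ⟨t, rfl⟩
  rw [dif_pos h]
  have h2 : h.choose = t := H.inj h.choose_spec
  rw [h2]

lemma nf_inr_unlab {w : H.G.V} (hw : ¬ ∃ i, H.lab i = w) :
    nf G H (Sum.inr w) = Sum.inr w := by
  simp only [nf, Sum.elim_inl, Sum.elim_inr]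
  rw [dif_neg hw]

lemma nf_of_rel {x y : G.G.V ⊕ H.G.V}
    (h : Relation.EqvGen
      (fun a b => ∃ i : Fin l, a = Sum.inl (G.lab i) ∧ b = Sum.inr (H.lab i)) x y) :
    nf G H x = nf G H y := by
  induction h with
  | rel a b hab =>
    obtain ⟨i, rfl, rfl⟩ := hab
    rw [nf_inr_lab, nf_inl]
  | refl => rfl
  | symm _ _ _ ih => exact ih.symm
  | trans _ _ _ _ _ ih1 ih2 => exact ih1.trans ih2

lemma mk_nf (x : G.G.V ⊕ H.G.V) :
    Quotient.mk (glueSetoid G H) (nf G H x) = Quotient.mk (glueSetoid G H) x := by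
  cases x with
  | inl v => rfl
  | inr w =>
    by_cases h : ∃ i, H.lab i = w
    · obtain ⟨i, rfl⟩ := h
      rw [nf_inr_lab]
      exact Quotient.sound (Relation.EqvGen.rel _ _ ⟨i, rfl, rfl⟩)
    · rw [nf_inr_unlab G H h]

lemma mk_eq_mk_iff (x y : G.G.V ⊕ H.G.V) :
    (Quotient.mk (glueSetoid G H) x = Quotient.mk (glueSetoid G H) y) ↔
      nf G H x = nf G H y := by
  constructor
  · intro h
    exact nf_of_rel G H (Quotient.exact h)
  · intro h
    rw [← mk_nf G H x, ← mk_nf G H y, h]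

lemma mkG_eq_mkG_iff (a v : G.G.V) : mkG G H a = mkG G H v ↔ a = v := by
  rw [show (mkG G H a = mkG G H v) ↔ nf G H (Sum.inl a) = nf G H (Sum.inl v) from
    mk_eq_mk_iff G H _ _, nf_inl, nf_inl, Sum.inl.injEq]

lemma mkH_eq_mkH_iff (a w : H.G.V) : mkH G H a = mkH G H w ↔ a = w := by
  rw [show (mkH G H a = mkH G H w) ↔ nf G H (Sum.inr a) = nf G H (Sum.inr w) from
    mk_eq_mk_iff G H _ _]
  by_cases ha : ∃ i, H.lab i = a <;> by_cases hw : ∃ i, H.lab i = w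
  · simp only [nf, Sum.elim_inl, Sum.elim_inr]
    rw [dif_pos ha, dif_pos hw, Sum.inl.injEq]
    constructor
    · intro h
      have := G.inj h
      rw [← ha.choose_spec, ← hw.choose_spec, this]
    · intro h
      have : H.lab ha.choose = H.lab hw.choose := by
        rw [ha.choose_spec, hw.choose_spec, h]
      rw [H.inj this]
  · simp only [nf, Sum.elim_inl, Sum.elim_inr]
    rw [dif_pos ha, dif_neg hw]
    constructor
    · intro h
      exact absurd h (by simp)
    · intro h
      exact absurd (h ▸ ha) hw
  · simp only [nf, Sum.elim_inl, Sum.elim_inr]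
    rw [dif_neg ha, dif_pos hw]
    constructor
    · intro h
      exact absurd h (by simp)
    · intro h
      exact absurd (h ▸ hw) ha
  · rw [nf_inr_unlab G H ha, nf_inr_unlab G H hw, Sum.inr.injEq]

lemma mkH_eq_mkG_iff (w : H.G.V) (v : G.G.V) :
    mkH G H w = mkG G H v ↔ ∃ t, v = G.lab t ∧ w = H.lab t := by
  rw [show (mkH G H w = mkG G H v) ↔ nf G H (Sum.inr w) = nf G H (Sum.inl v) from
    mk_eq_mk_iff G H _ _, nf_inl]
  by_cases hw : ∃ i, H.lab i = w
  · simp only [nf, Sum.elim_inl, Sum.elim_inr]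
    rw [dif_pos hw, Sum.inl.injEq]
    constructor
    · intro h
      exact ⟨hw.choose, h.symm, hw.choose_spec.symm⟩
    · rintro ⟨t, rfl, rfl⟩
      have : hw.choose = t := H.inj hw.choose_spec
      rw [this]
  · rw [nf_inr_unlab G H hw]
    constructor
    · intro h
      exact absurd h (by simp)
    · rintro ⟨t, rfl, rfl⟩
      exact absurd ⟨t, rfl⟩ hw

lemma mkG_eq_mkH_iff (v : G.G.V) (w : H.G.V) :
    mkG G H v = mkH G H w ↔ ∃ t, v = G.lab t ∧ w = H.lab t := by
  rw [eq_comm, mkH_eq_mkG_iff]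

noncomputable def glueEquiv :
    ({v : G.G.V // ¬∃ i, G.lab i = v} ⊕ {w : H.G.V // ¬∃ i, H.lab i = w} ⊕ Fin l) ≃
      (G.glue H).V := by
  apply Equiv.ofBijective (fun x => match x with
    | Sum.inl v => mkG G H v.1
    | Sum.inr (Sum.inl w) => mkH G H w.1
    | Sum.inr (Sum.inr t) => mkG G H (G.lab t))
  constructor
  · rintro (⟨v, hv⟩ | ⟨w, hw⟩ | t) (⟨v', hv'⟩ | ⟨w', hw'⟩ | t') h
    · simp only [mkG_eq_mkG_iff] at h
      simp [h]
    · rw [mkG_eq_mkH_iff] at h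
      obtain ⟨t, ht, -⟩ := h
      exact absurd ⟨t, ht.symm⟩ hv
    · rw [mkG_eq_mkG_iff] at h
      exact absurd ⟨t', h.symm⟩ hv
    · rw [mkH_eq_mkG_iff] at h
      obtain ⟨t, -, ht⟩ := h
      exact absurd ⟨t, ht.symm⟩ hw
    · simp only [mkH_eq_mkH_iff] at h
      simp [h]
    · rw [mkH_eq_mkG_iff] at h
      obtain ⟨s, hs, hs'⟩ := h
      exact absurd ⟨s, hs'.symm⟩ hw
    · rw [mkG_eq_mkG_iff] at h
      exact absurd ⟨t, h⟩ hv'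
    · rw [mkG_eq_mkH_iff] at h
      obtain ⟨s, -, hs⟩ := h
      exact absurd ⟨s, hs.symm⟩ hw'
    · rw [mkG_eq_mkG_iff] at h
      simp [G.inj h]
  · intro q
    obtain ⟨x, rfl⟩ := Quot.exists_rep q
    cases x with
    | inl v =>
      by_cases hv : ∃ i, G.lab i = v
      · obtain ⟨t, rfl⟩ := hv
        exact ⟨Sum.inr (Sum.inr t), rfl⟩
      · exact ⟨Sum.inl ⟨v, hv⟩, rfl⟩
    | inr w =>
      by_cases hw : ∃ i, H.lab i = w
      · obtain ⟨t, rfl⟩ := hw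
        refine ⟨Sum.inr (Sum.inr t), ?_⟩
        exact Quotient.sound (Relation.EqvGen.rel _ _ ⟨t, rfl, rfl⟩)
      · exact ⟨Sum.inr (Sum.inl ⟨w, hw⟩), rfl⟩

section inc
variable (κG : G.G.E → Fin k)

lemma inc_mkG_inl (v : G.G.V) (e : G.G.E) :
    (G.glue H).inc (mkG G H v) (Sum.inl e) = G.G.inc v e := by
  unfold MGraph.inc
  have h1 : (((G.glue H).ends (Sum.inl e)).1 = mkG G H v) ↔ ((G.G.ends e).1 = v) :=
    mkG_eq_mkG_iff G H _ v
  have h2 : (((G.glue H).ends (Sum.inl e)).2 = mkG G H v) ↔ ((G.G.ends e).2 = v) :=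
    mkG_eq_mkG_iff G H _ v
  rw [if_congr h1 rfl rfl, if_congr h2 rfl rfl]

lemma inc_mkH_inr (w : H.G.V) (e : H.G.E) :
    (G.glue H).inc (mkH G H w) (Sum.inr e) = H.G.inc w e := by
  unfold MGraph.inc
  have h1 : (((G.glue H).ends (Sum.inr e)).1 = mkH G H w) ↔ ((H.G.ends e).1 = w) :=
    mkH_eq_mkH_iff G H _ w
  have h2 : (((G.glue H).ends (Sum.inr e)).2 = mkH G H w) ↔ ((H.G.ends e).2 = w) :=
    mkH_eq_mkH_iff G H _ w
  rw [if_congr h1 rfl rfl, if_congr h2 rfl rfl]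

lemma inc_mkG_inr_unlab {v : G.G.V} (hv : ¬∃ i, G.lab i = v) (e : H.G.E) :
    (G.glue H).inc (mkG G H v) (Sum.inr e) = 0 := by
  unfold MGraph.inc
  have h1 : (((G.glue H).ends (Sum.inr e)).1 = mkG G H v) ↔
      (∃ t, v = G.lab t ∧ (H.G.ends e).1 = H.lab t) := mkH_eq_mkG_iff G H _ v
  have h2 : (((G.glue H).ends (Sum.inr e)).2 = mkG G H v) ↔
      (∃ t, v = G.lab t ∧ (H.G.ends e).2 = H.lab t) := mkH_eq_mkG_iff G H _ v
  have hf1 : ¬ (∃ t, v = G.lab t ∧ (H.G.ends e).1 = H.lab t) := by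
    rintro ⟨t, rfl, -⟩
    exact hv ⟨t, rfl⟩
  have hf2 : ¬ (∃ t, v = G.lab t ∧ (H.G.ends e).2 = H.lab t) := by
    rintro ⟨t, rfl, -⟩
    exact hv ⟨t, rfl⟩
  rw [if_congr h1 rfl rfl, if_congr h2 rfl rfl, if_neg hf1, if_neg hf2]

lemma inc_mkH_inl_unlab {w : H.G.V} (hw : ¬∃ i, H.lab i = w) (e : G.G.E) :
    (G.glue H).inc (mkH G H w) (Sum.inl e) = 0 := by
  unfold MGraph.inc
  have h1 : (((G.glue H).ends (Sum.inl e)).1 = mkH G H w) ↔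
      (∃ t, (G.G.ends e).1 = G.lab t ∧ w = H.lab t) := mkG_eq_mkH_iff G H _ w
  have h2 : (((G.glue H).ends (Sum.inl e)).2 = mkH G H w) ↔
      (∃ t, (G.G.ends e).2 = G.lab t ∧ w = H.lab t) := mkG_eq_mkH_iff G H _ w
  have hf1 : ¬ (∃ t, (G.G.ends e).1 = G.lab t ∧ w = H.lab t) := by
    rintro ⟨t, -, rfl⟩
    exact hw ⟨t, rfl⟩
  have hf2 : ¬ (∃ t, (G.G.ends e).2 = G.lab t ∧ w = H.lab t) := by
    rintro ⟨t, -, rfl⟩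
    exact hw ⟨t, rfl⟩
  rw [if_congr h1 rfl rfl, if_congr h2 rfl rfl, if_neg hf1, if_neg hf2]

lemma inc_mkG_lab_inr (t : Fin l) (e : H.G.E) :
    (G.glue H).inc (mkG G H (G.lab t)) (Sum.inr e) = H.G.inc (H.lab t) e := by
  unfold MGraph.inc
  have key : ∀ w : H.G.V, (mkH G H w = mkG G H (G.lab t)) ↔ (w = H.lab t) := by
    intro w
    rw [mkH_eq_mkG_iff]
    constructor
    · rintro ⟨s, hs, rfl⟩
      rw [G.inj hs]
    · rintro rfl
      exact ⟨t, rfl, rfl⟩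
  have h1 : (((G.glue H).ends (Sum.inr e)).1 = mkG G H (G.lab t)) ↔
      ((H.G.ends e).1 = H.lab t) := key _
  have h2 : (((G.glue H).ends (Sum.inr e)).2 = mkG G H (G.lab t)) ↔
      ((H.G.ends e).2 = H.lab t) := key _
  rw [if_congr h1 rfl rfl, if_congr h2 rfl rfl]

end inc

section deg
variable {k : ℕ} (κG : G.G.E → Fin k) (κH : H.G.E → Fin k)

lemma sum_glue_E {M : Type} [AddCommMonoid M] (F : (G.glue H).E → M) :
    ∑ e : (G.glue H).E, F e = (∑ e : G.G.E, F (Sum.inl e)) + ∑ e : H.G.E, F (Sum.inr e) :=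
  calc ∑ e : (G.glue H).E, F e
      = ∑ e : G.G.E ⊕ H.G.E, F e := Fintype.sum_equiv (Equiv.refl _) _ _ (fun _ => rfl)
    _ = _ := Fintype.sum_sum_type F

lemma degVec_glue_unlabG {v : G.G.V} (hv : ¬∃ i, G.lab i = v) :
    (G.glue H).degVec (Sum.elim κG κH) (mkG G H v) = G.G.degVec κG v := by
  funext c
  show (∑ e : (G.glue H).E, _) = _
  rw [sum_glue_E]
  have h2 : (∑ e : H.G.E,
      if (Sum.elim κG κH : (G.glue H).E → Fin k) (Sum.inr e) = c
        then (G.glue H).inc (mkG G H v) (Sum.inr e) else 0) = 0 := by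
    apply Finset.sum_eq_zero
    intro e _
    rw [inc_mkG_inr_unlab G H hv e]
    simp
    exact ite_self 0
  rw [h2, add_zero]
  apply Finset.sum_congr rfl
  intro e _
  rw [inc_mkG_inl]
  simp only [Sum.elim_inl]
  exact if_congr Iff.rfl rfl rfl

lemma degVec_glue_unlabH {w : H.G.V} (hw : ¬∃ i, H.lab i = w) :
    (G.glue H).degVec (Sum.elim κG κH) (mkH G H w) = H.G.degVec κH w := by
  funext c
  show (∑ e : (G.glue H).E, _) = _
  rw [sum_glue_E]
  have h1 : (∑ e : G.G.E,
      if (Sum.elim κG κH : (G.glue H).E → Fin k) (Sum.inl e) = c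
        then (G.glue H).inc (mkH G H w) (Sum.inl e) else 0) = 0 := by
    apply Finset.sum_eq_zero
    intro e _
    rw [inc_mkH_inl_unlab G H hw e]
    simp
    exact ite_self 0
  rw [h1, zero_add]
  apply Finset.sum_congr rfl
  intro e _
  rw [inc_mkH_inr]
  simp only [Sum.elim_inr]
  exact if_congr Iff.rfl rfl rfl

lemma degVec_glue_lab (t : Fin l) :
    (G.glue H).degVec (Sum.elim κG κH) (mkG G H (G.lab t)) =
      G.G.degVec κG (G.lab t) + H.G.degVec κH (H.lab t) := by
  funext c
  show (∑ e : (G.glue H).E, _) = _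
  rw [sum_glue_E]
  rw [Pi.add_apply]
  congr 1
  · apply Finset.sum_congr rfl
    intro e _
    rw [inc_mkG_inl]
    simp only [Sum.elim_inl]
    exact if_congr Iff.rfl rfl rfl
  · apply Finset.sum_congr rfl
    intro e _
    rw [inc_mkG_lab_inr]
    simp only [Sum.elim_inr]
    exact if_congr Iff.rfl rfl rfl

end deg

lemma pf_glue (k : ℕ) (y : (Fin k → ℕ) → ℂ) :
    MGraph.pf k y (G.glue H) =
      ∑ κG : G.G.E → Fin k, ∑ κH : H.G.E → Fin k,
        ((∏ v : {v : G.G.V // ¬∃ i, G.lab i = v}, y (G.G.degVec κG v.1)) *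
          (∏ w : {w : H.G.V // ¬∃ i, H.lab i = w}, y (H.G.degVec κH w.1))) *
          ∏ t : Fin l, y (G.G.degVec κG (G.lab t) + H.G.degVec κH (H.lab t)) := by
  have hobl : ∀ (p : (G.G.E → Fin k) × (H.G.E → Fin k)),
      ((∏ v : {v : G.G.V // ¬∃ i, G.lab i = v}, y (G.G.degVec p.1 v.1)) *
        (∏ w : {w : H.G.V // ¬∃ i, H.lab i = w}, y (H.G.degVec p.2 w.1))) *
        (∏ t : Fin l, y (G.G.degVec p.1 (G.lab t) + H.G.degVec p.2 (H.lab t))) =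
      ∏ q : (G.glue H).V, y ((G.glue H).degVec (Sum.elim p.1 p.2) q) := by
    rintro ⟨κG, κH⟩
    have hprod : ∏ q : (G.glue H).V, y ((G.glue H).degVec (Sum.elim κG κH) q) =
        ∏ x : ({v : G.G.V // ¬∃ i, G.lab i = v} ⊕ {w : H.G.V // ¬∃ i, H.lab i = w} ⊕ Fin l),
          y ((G.glue H).degVec (Sum.elim κG κH) (glueEquiv G H x)) :=
      (Fintype.prod_equiv (glueEquiv G H)
        (fun x => y ((G.glue H).degVec (Sum.elim κG κH) (glueEquiv G H x))) _
        (fun _ => rfl)).symm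
    symm
    rw [hprod, Fintype.prod_sum_type, Fintype.prod_sum_type]
    rw [mul_assoc]
    congr 1
    · apply Finset.prod_congr rfl
      rintro ⟨v, hv⟩ _
      show y ((G.glue H).degVec (Sum.elim κG κH) (mkG G H v)) = _
      rw [degVec_glue_unlabG G H κG κH hv]
    congr 1
    · apply Finset.prod_congr rfl
      rintro ⟨w, hw⟩ _
      show y ((G.glue H).degVec (Sum.elim κG κH) (mkH G H w)) = _
      rw [degVec_glue_unlabH G H κG κH hw]
    · apply Finset.prod_congr rfl
      intro t _
      show y ((G.glue H).degVec (Sum.elim κG κH) (mkG G H (G.lab t))) = _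
      rw [degVec_glue_lab G H κG κH t]
  unfold MGraph.pf
  exact Eq.trans (Fintype.sum_bijective _
    (Equiv.sumArrowEquivProdArrow G.G.E H.G.E (Fin k)).symm.bijective _ _ hobl).symm
    (Fintype.sum_prod_type _)

end LGraph


/-- if the moment matrix of `y` has rank at most `r` (all
`(r+1) × (r+1)` minors vanish), then the `l`-th connection matrix of `f_y` has rank
at most `r^l` (all `(r^l + 1) × (r^l + 1)` minors vanish). -/
theorem connection_matrix_rank_le (k r l : ℕ) (y : (Fin k → ℕ) → ℂ)
    (hrank : ∀ α β : Fin (r + 1) → (Fin k → ℕ),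
      (Matrix.of fun i j => y (α i + β j)).det = 0)
    (Gs Hs : Fin (r ^ l + 1) → LGraph l) :
    (Matrix.of fun i j => MGraph.pf k y ((Gs i).glue (Hs j))).det = 0 := by
  classical
  obtain ⟨ι, hι, u, v, hcard, huv⟩ := exists_factorization r (fun a b => y (a + b)) hrank
  have hmat : (Matrix.of fun i j => MGraph.pf k y ((Gs i).glue (Hs j))) =
      Matrix.of fun i j => ∑ cc : Fin l → ι,
        (∑ κG : (Gs i).G.E → Fin k,
          (∏ vv : {vv : (Gs i).G.V // ¬∃ s, (Gs i).lab s = vv},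
              y ((Gs i).G.degVec κG vv.1)) *
            ∏ t : Fin l, u ((Gs i).G.degVec κG ((Gs i).lab t)) (cc t)) *
        (∑ κH : (Hs j).G.E → Fin k,
          (∏ ww : {ww : (Hs j).G.V // ¬∃ s, (Hs j).lab s = ww},
              y ((Hs j).G.degVec κH ww.1)) *
            ∏ t : Fin l, v ((Hs j).G.degVec κH ((Hs j).lab t)) (cc t)) := by
    ext i j
    show MGraph.pf k y ((Gs i).glue (Hs j)) = _
    rw [LGraph.pf_glue]
    calc
      ∑ κG : (Gs i).G.E → Fin k, ∑ κH : (Hs j).G.E → Fin k,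
          ((∏ vv : {vv : (Gs i).G.V // ¬∃ s, (Gs i).lab s = vv},
              y ((Gs i).G.degVec κG vv.1)) *
            (∏ ww : {ww : (Hs j).G.V // ¬∃ s, (Hs j).lab s = ww},
              y ((Hs j).G.degVec κH ww.1))) *
            ∏ t : Fin l, y ((Gs i).G.degVec κG ((Gs i).lab t) +
              (Hs j).G.degVec κH ((Hs j).lab t))
        = ∑ κG : (Gs i).G.E → Fin k, ∑ κH : (Hs j).G.E → Fin k, ∑ cc : Fin l → ι,
            ((∏ vv : {vv : (Gs i).G.V // ¬∃ s, (Gs i).lab s = vv},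
                y ((Gs i).G.degVec κG vv.1)) *
              ∏ t : Fin l, u ((Gs i).G.degVec κG ((Gs i).lab t)) (cc t)) *
            ((∏ ww : {ww : (Hs j).G.V // ¬∃ s, (Hs j).lab s = ww},
                y ((Hs j).G.degVec κH ww.1)) *
              ∏ t : Fin l, v ((Hs j).G.degVec κH ((Hs j).lab t)) (cc t)) := by
          apply Finset.sum_congr rfl
          intro κG _
          apply Finset.sum_congr rfl
          intro κH _
          have hy : (∏ t : Fin l, y ((Gs i).G.degVec κG ((Gs i).lab t) +
              (Hs j).G.degVec κH ((Hs j).lab t))) =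
              ∑ cc : Fin l → ι, ∏ t : Fin l,
                u ((Gs i).G.degVec κG ((Gs i).lab t)) (cc t) *
                  v ((Hs j).G.degVec κH ((Hs j).lab t)) (cc t) :=
            calc (∏ t : Fin l, y ((Gs i).G.degVec κG ((Gs i).lab t) +
                (Hs j).G.degVec κH ((Hs j).lab t)))
                = ∏ t : Fin l, ∑ c : ι,
                    u ((Gs i).G.degVec κG ((Gs i).lab t)) c *
                      v ((Hs j).G.degVec κH ((Hs j).lab t)) c :=
                  Finset.prod_congr rfl (fun t _ => huv _ _)
              _ = _ := Fintype.prod_sum _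
          rw [hy, Finset.mul_sum]
          apply Finset.sum_congr rfl
          intro cc _
          rw [Finset.prod_mul_distrib]
          ring
      _ = ∑ cc : Fin l → ι, ∑ κG : (Gs i).G.E → Fin k, ∑ κH : (Hs j).G.E → Fin k,
            ((∏ vv : {vv : (Gs i).G.V // ¬∃ s, (Gs i).lab s = vv},
                y ((Gs i).G.degVec κG vv.1)) *
              ∏ t : Fin l, u ((Gs i).G.degVec κG ((Gs i).lab t)) (cc t)) *
            ((∏ ww : {ww : (Hs j).G.V // ¬∃ s, (Hs j).lab s = ww},
                y ((Hs j).G.degVec κH ww.1)) *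
              ∏ t : Fin l, v ((Hs j).G.degVec κH ((Hs j).lab t)) (cc t)) := by
          rw [Finset.sum_congr rfl (fun κG _ => Finset.sum_comm)]
          exact Finset.sum_comm
      _ = _ := by
          apply Finset.sum_congr rfl
          intro cc _
          exact (Finset.sum_mul_sum _ _ _ _).symm
  rw [hmat]
  apply det_eq_zero_of_factor
  rw [Fintype.card_fun]
  simp only [Fintype.card_fin]
  calc Fintype.card ι ^ l ≤ r ^ l := Nat.pow_le_pow_left hcard l
    _ < r ^ l + 1 := Nat.lt_succ_self _
end

section
/- Define f : G → C by f(G) = (-2)^{c(G)} if G is 2-regular (where c(G) is the number of connected components) and f(G) = 0 otherwise. Then f(∅) = 1, f is multiplicative, but f is not the partition function of any k-color vertex model over C for any k: for every k there exist a graph G, U ⊆ V(G) with |U| = k+1, and s : U → V(G) with Σ_{π∈S_U} sgn(π) f(G_{s∘π}) ≠ 0. -/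
namespace MGraph

/-- the number of connected components of a multigraph: the number of classes of the
equivalence relation generated by adjacency. -/
noncomputable def numComponents (G : MGraph) : ℕ :=
  Nat.card (Quotient (Relation.EqvGen.setoid
    (fun a b : G.V => ∃ e : G.E, G.ends e = (a, b) ∨ G.ends e = (b, a))))

/-- a multigraph is 2-regular if every vertex has degree 2 (a loop counting twice). -/
def TwoRegular (G : MGraph) : Prop := ∀ v : G.V, (∑ e : G.E, G.inc v e) = 2

end MGraph


namespace MGraph

lemma twoRegular_empty : MGraph.empty.TwoRegular := fun v => v.elim

lemma numComponents_empty : MGraph.empty.numComponents = 0 := by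
  rw [numComponents]
  haveI : IsEmpty (Quotient (Relation.EqvGen.setoid
      (fun a b : MGraph.empty.V => ∃ e : MGraph.empty.E,
        MGraph.empty.ends e = (a, b) ∨ MGraph.empty.ends e = (b, a)))) :=
    ⟨fun q => Quotient.inductionOn q fun v => v.elim⟩
  exact Nat.card_of_isEmpty

lemma twoRegular_disjUnion_iff (G H : MGraph) :
    (G.disjUnion H).TwoRegular ↔ G.TwoRegular ∧ H.TwoRegular := by
  have hl : ∀ v : G.V, (∑ e : (G.disjUnion H).E, (G.disjUnion H).inc (Sum.inl v) e)
      = ∑ e : G.E, G.inc v e := by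
    intro v
    show (∑ e : G.E ⊕ H.E, (G.disjUnion H).inc (Sum.inl v) e) = _
    refine (Fintype.sum_sum_type _).trans ?_
    simp [inc, disjUnion]
  have hr : ∀ v : H.V, (∑ e : (G.disjUnion H).E, (G.disjUnion H).inc (Sum.inr v) e)
      = ∑ e : H.E, H.inc v e := by
    intro v
    show (∑ e : G.E ⊕ H.E, (G.disjUnion H).inc (Sum.inr v) e) = _
    refine (Fintype.sum_sum_type _).trans ?_
    simp [inc, disjUnion]
  constructor
  · intro h
    exact ⟨fun v => by rw [← hl v]; exact h (Sum.inl v),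
      fun v => by rw [← hr v]; exact h (Sum.inr v)⟩
  · rintro ⟨h1, h2⟩ v
    cases v with
    | inl v => rw [show (∑ e : (G.disjUnion H).E, (G.disjUnion H).inc (Sum.inl v) e) = _ from hl v]; exact h1 v
    | inr v => rw [show (∑ e : (G.disjUnion H).E, (G.disjUnion H).inc (Sum.inr v) e) = _ from hr v]; exact h2 v

lemma numComponents_disjUnion (G H : MGraph) :
    (G.disjUnion H).numComponents = G.numComponents + H.numComponents := by
  classical
  have F : Quotient (Relation.EqvGen.setoid
        (fun a b : (G.disjUnion H).V => ∃ e : (G.disjUnion H).E,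
          (G.disjUnion H).ends e = (a, b) ∨ (G.disjUnion H).ends e = (b, a))) ≃
      (Quotient (Relation.EqvGen.setoid (fun a b : G.V => ∃ e : G.E,
          G.ends e = (a, b) ∨ G.ends e = (b, a))) ⊕
       Quotient (Relation.EqvGen.setoid (fun a b : H.V => ∃ e : H.E,
          H.ends e = (a, b) ∨ H.ends e = (b, a)))) := by
    refine ⟨Quotient.lift (Sum.map (Quotient.mk _) (Quotient.mk _)) ?_,
      Sum.elim (Quotient.lift (fun a => Quotient.mk _ (Sum.inl a)) ?_)
        (Quotient.lift (fun b => Quotient.mk _ (Sum.inr b)) ?_), ?_, ?_⟩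
    · intro a b hab
      induction hab with
      | rel a b h =>
        obtain ⟨e, he⟩ := h
        cases e with
        | inl e0 =>
          have hends : (G.disjUnion H).ends (Sum.inl e0)
              = (Sum.inl (G.ends e0).1, Sum.inl (G.ends e0).2) := rfl
          rw [hends] at he
          rcases he with he | he <;> replace he := Prod.mk.inj he <;>
            obtain ⟨h1, h2⟩ := he <;> subst h1 <;> subst h2
          · exact congrArg Sum.inl (Quotient.sound
              (Relation.EqvGen.rel _ _ ⟨e0, Or.inl rfl⟩))
          · exact congrArg Sum.inl (Quotient.sound
              (Relation.EqvGen.rel _ _ ⟨e0, Or.inr rfl⟩))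
        | inr e0 =>
          have hends : (G.disjUnion H).ends (Sum.inr e0)
              = (Sum.inr (H.ends e0).1, Sum.inr (H.ends e0).2) := rfl
          rw [hends] at he
          rcases he with he | he <;> replace he := Prod.mk.inj he <;>
            obtain ⟨h1, h2⟩ := he <;> subst h1 <;> subst h2
          · exact congrArg Sum.inr (Quotient.sound
              (Relation.EqvGen.rel _ _ ⟨e0, Or.inl rfl⟩))
          · exact congrArg Sum.inr (Quotient.sound
              (Relation.EqvGen.rel _ _ ⟨e0, Or.inr rfl⟩))
      | refl a => rfl
      | symm a b _ ih => exact ih.symm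
      | trans a b c _ _ ih1 ih2 => exact ih1.trans ih2
    · intro a b hab
      induction hab with
      | rel a b h =>
        obtain ⟨e, he⟩ := h
        refine Quotient.sound (Relation.EqvGen.rel _ _ ⟨Sum.inl e, ?_⟩)
        rcases he with he | he
        · left
          rw [show (G.disjUnion H).ends (Sum.inl e)
            = (Sum.inl (G.ends e).1, Sum.inl (G.ends e).2) from rfl, he]; rfl
        · right
          rw [show (G.disjUnion H).ends (Sum.inl e)
            = (Sum.inl (G.ends e).1, Sum.inl (G.ends e).2) from rfl, he]; rfl
      | refl a => rfl
      | symm a b _ ih => exact ih.symm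
      | trans a b c _ _ ih1 ih2 => exact ih1.trans ih2
    · intro a b hab
      induction hab with
      | rel a b h =>
        obtain ⟨e, he⟩ := h
        refine Quotient.sound (Relation.EqvGen.rel _ _ ⟨Sum.inr e, ?_⟩)
        rcases he with he | he
        · left
          rw [show (G.disjUnion H).ends (Sum.inr e)
            = (Sum.inr (H.ends e).1, Sum.inr (H.ends e).2) from rfl, he]; rfl
        · right
          rw [show (G.disjUnion H).ends (Sum.inr e)
            = (Sum.inr (H.ends e).1, Sum.inr (H.ends e).2) from rfl, he]; rfl
      | refl a => rfl
      | symm a b _ ih => exact ih.symm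
      | trans a b c _ _ ih1 ih2 => exact ih1.trans ih2
    · intro q
      refine Quotient.inductionOn q ?_
      rintro (a | b) <;> rfl
    · rintro (qa | qb)
      · exact Quotient.inductionOn qa fun a => rfl
      · exact Quotient.inductionOn qb fun b => rfl
  rw [numComponents, numComponents, numComponents, Nat.card_congr F, Nat.card_sum]

end MGraph

namespace MGraph

private def DD {k : ℕ} (y : (Fin k → ℕ) → ℂ) (G : MGraph) (U : Finset G.V)
    (s : {v // v ∈ U} → G.V) (κ : G.E → Fin k) (a b : {v // v ∈ U} → Fin k) : ℂ :=
  ∏ v : G.V, y (fun c0 => G.degVec κ v c0 +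
    ∑ u : {v // v ∈ U}, ((if a u = c0 then (if (u : G.V) = v then 1 else 0) else 0) +
      (if b u = c0 then (if s u = v then 1 else 0) else 0)))

lemma degVec_addEdges {k : ℕ} (G : MGraph) (U : Finset G.V) (t : {v // v ∈ U} → G.V)
    (κ : G.E → Fin k) (c : {v // v ∈ U} → Fin k) (v : G.V) :
    (G.addEdges U t).degVec (Sum.elim κ c) v = fun c0 => G.degVec κ v c0 +
      ∑ u : {v // v ∈ U}, (if c u = c0 then
        ((if (u : G.V) = v then 1 else 0) + (if t u = v then 1 else 0)) else 0) := by
  funext c0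
  show (∑ e : G.E ⊕ {v // v ∈ U},
      if Sum.elim κ c e = c0 then (G.addEdges U t).inc v e else 0) = _
  rw [Fintype.sum_sum_type]
  rfl

lemma pf_addEdges {k : ℕ} (y : (Fin k → ℕ) → ℂ) (G : MGraph) (U : Finset G.V)
    (s : {v // v ∈ U} → G.V) (π : Equiv.Perm {v // v ∈ U}) :
    MGraph.pf k y (G.addEdges U (s ∘ π)) =
      ∑ κ : G.E → Fin k, ∑ c : {v // v ∈ U} → Fin k, DD y G U s κ c (c ∘ ⇑π⁻¹) := by
  rw [MGraph.pf]
  show (∑ κ' : (G.E ⊕ {v // v ∈ U}) → Fin k,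
      ∏ v : G.V, y ((G.addEdges U (s ∘ π)).degVec κ' v)) = _
  rw [← Equiv.sum_comp (Equiv.sumArrowEquivProdArrow G.E {v // v ∈ U} (Fin k)).symm
    (fun κ' => ∏ v : G.V, y ((G.addEdges U (s ∘ π)).degVec κ' v)), Fintype.sum_prod_type]
  refine Finset.sum_congr rfl fun κ _ => Finset.sum_congr rfl fun c _ => ?_
  show (∏ v : G.V, y ((G.addEdges U (s ∘ π)).degVec (Sum.elim κ c) v)) = _
  rw [DD]
  refine Finset.prod_congr rfl fun v _ => ?_
  rw [degVec_addEdges]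
  refine congrArg y ?_
  funext c0
  congr 1
  have hsplit : ∀ u : {v // v ∈ U}, (if c u = c0 then
      ((if (u : G.V) = v then 1 else 0) + (if (s ∘ π) u = v then 1 else 0)) else 0)
      = (if c u = c0 then (if (u : G.V) = v then 1 else 0) else 0)
        + (if c u = c0 then (if s (π u) = v then 1 else 0) else 0) := fun u => by
    by_cases h : c u = c0 <;> simp [h, Function.comp]
  rw [Finset.sum_congr rfl fun u _ => hsplit u, Finset.sum_add_distrib,
    Finset.sum_add_distrib]
  congr 1
  rw [← Equiv.sum_comp (π : Equiv.Perm {v // v ∈ U})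
    (fun u => (if (c ∘ ⇑π⁻¹) u = c0 then (if s u = v then 1 else 0) else 0))]
  refine Finset.sum_congr rfl fun u _ => ?_
  simp

lemma pf_cancel {k : ℕ} (y : (Fin k → ℕ) → ℂ) (G : MGraph) (U : Finset G.V)
    (s : {v // v ∈ U} → G.V) (hU : k < U.card) :
    ∑ π : Equiv.Perm {v // v ∈ U},
      ((Equiv.Perm.sign π : ℤ) : ℂ) * MGraph.pf k y (G.addEdges U (s ∘ π)) = 0 := by
  classical
  have step1 : ∑ π : Equiv.Perm {v // v ∈ U},
      ((Equiv.Perm.sign π : ℤ) : ℂ) * MGraph.pf k y (G.addEdges U (s ∘ π))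
      = ∑ π : Equiv.Perm {v // v ∈ U}, ∑ κ : G.E → Fin k, ∑ d : {v // v ∈ U} → Fin k,
        ((Equiv.Perm.sign π : ℤ) : ℂ) * DD y G U s κ (d ∘ ⇑π) d := by
    refine Finset.sum_congr rfl fun π _ => ?_
    rw [pf_addEdges, Finset.mul_sum]
    refine Finset.sum_congr rfl fun κ _ => ?_
    rw [Finset.mul_sum]
    rw [← Equiv.sum_comp (Equiv.arrowCongr (π : Equiv.Perm {v // v ∈ U}).symm
        (Equiv.refl (Fin k)))
      (fun c => ((Equiv.Perm.sign π : ℤ) : ℂ) * DD y G U s κ c (c ∘ ⇑π⁻¹))]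
    refine Finset.sum_congr rfl fun d _ => ?_
    have h1 : (Equiv.arrowCongr (π : Equiv.Perm {v // v ∈ U}).symm (Equiv.refl (Fin k))) d
        = d ∘ ⇑π := by
      funext u; simp [Equiv.arrowCongr]
    rw [h1]
    have h2 : ((d ∘ ⇑π) ∘ ⇑π⁻¹) = d := by funext u; simp
    rw [h2]
  rw [step1, Finset.sum_comm]
  refine Finset.sum_eq_zero fun κ _ => ?_
  rw [Finset.sum_comm]
  refine Finset.sum_eq_zero fun d _ => ?_
  obtain ⟨u1, u2, hne, hdd⟩ := Fintype.exists_ne_map_eq_of_card_lt d (by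
    rw [Fintype.card_fin, Fintype.card_coe]; exact hU)
  set σ := Equiv.swap u1 u2 with hσ
  have hterm : ∀ π : Equiv.Perm {v // v ∈ U},
      ((Equiv.Perm.sign (σ * π) : ℤ) : ℂ) * DD y G U s κ (d ∘ ⇑(σ * π)) d
        = -(((Equiv.Perm.sign π : ℤ) : ℂ) * DD y G U s κ (d ∘ ⇑π) d) := by
    intro π
    have hd : d ∘ ⇑(σ * π) = d ∘ ⇑π := by
      funext u
      show d (σ (π u)) = d (π u)
      by_cases h1 : π u = u1
      · rw [h1, hσ, Equiv.swap_apply_left]; exact hdd.symm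
      · by_cases h2 : π u = u2
        · rw [h2, hσ, Equiv.swap_apply_right]; exact hdd
        · rw [hσ, Equiv.swap_apply_of_ne_of_ne h1 h2]
    rw [hd, Equiv.Perm.sign_mul, Equiv.Perm.sign_swap hne]
    push_cast
    ring
  have hsum : (∑ π : Equiv.Perm {v // v ∈ U},
      ((Equiv.Perm.sign (σ * π) : ℤ) : ℂ) * DD y G U s κ (d ∘ ⇑(σ * π)) d)
      = ∑ π : Equiv.Perm {v // v ∈ U},
        ((Equiv.Perm.sign π : ℤ) : ℂ) * DD y G U s κ (d ∘ ⇑π) d :=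
    Fintype.sum_equiv (Equiv.mulLeft σ) _ _ (fun π => rfl)
  rw [Finset.sum_congr rfl fun π _ => hterm π] at hsum
  rw [Finset.sum_neg_distrib] at hsum
  linear_combination (-1/2 : ℂ) * hsum

end MGraph
open Equiv in
lemma eqvGen_iff_sameCycle {β : Type} [Fintype β] [DecidableEq β] (π : Equiv.Perm β)
    (a b : β) :
    Relation.EqvGen (fun a b : β => π a = b ∨ π b = a) a b ↔ π.SameCycle a b := by
  constructor
  · intro h
    induction h with
    | rel a b h =>
      rcases h with h | h
      · exact ⟨1, by simpa using h⟩
      · exact Equiv.Perm.SameCycle.symm ⟨1, by simpa using h⟩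
    | refl a => exact Equiv.Perm.SameCycle.refl _ _
    | symm a b _ ih => exact ih.symm
    | trans a b c _ _ ih1 ih2 => exact ih1.trans ih2
  · intro h
    obtain ⟨i, hi, hpow⟩ := h.exists_pow_eq'
    have key : ∀ m : ℕ, Relation.EqvGen (fun a b : β => π a = b ∨ π b = a) a ((π ^ m) a) := by
      intro m
      induction m with
      | zero => simpa using Relation.EqvGen.refl a
      | succ m ih =>
        refine Relation.EqvGen.trans _ _ _ ih (Relation.EqvGen.rel _ _ (Or.inl ?_))
        rw [pow_succ', Equiv.Perm.mul_apply]
    exact hpow ▸ key i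

lemma orb_count {β : Type} [Fintype β] [DecidableEq β] (π : Equiv.Perm β) :
    Nat.card (Quotient (Relation.EqvGen.setoid (fun a b : β => π a = b ∨ π b = a)))
      = (Fintype.card β - π.support.card) + π.cycleFactorsFinset.card := by
  classical
  have hsetoid : (Relation.EqvGen.setoid (fun a b : β => π a = b ∨ π b = a)) =
      ⟨π.SameCycle, ⟨fun a => Equiv.Perm.SameCycle.refl _ _, fun h => h.symm,
        fun h h' => h.trans h'⟩⟩ :=
    Setoid.ext (eqvGen_iff_sameCycle π)
  rw [hsetoid]
  have key : Quotient (⟨π.SameCycle, ⟨fun a => Equiv.Perm.SameCycle.refl _ _, fun h => h.symm,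
      fun h h' => h.trans h'⟩⟩ : Setoid β) ≃
      ({x : β // π x = x} ⊕ {c : Equiv.Perm β // c ∈ π.cycleFactorsFinset}) := by
    refine Equiv.ofBijective (Quotient.lift (fun x => if h : π x = x then Sum.inl ⟨x, h⟩ else
      Sum.inr ⟨π.cycleOf x, Equiv.Perm.cycleOf_mem_cycleFactorsFinset_iff.2
        (Equiv.Perm.mem_support.2 h)⟩) ?_) ⟨?_, ?_⟩
    · intro a b hab
      replace hab : π.SameCycle a b := hab
      by_cases ha : π a = a
      · obtain ⟨i, rfl⟩ := hab
        rw [Equiv.Perm.zpow_apply_eq_self_of_apply_eq_self ha]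
      · have hb : ¬ π b = b := by
          intro hb
          obtain ⟨i, rfl⟩ := hab.symm
          rw [Equiv.Perm.zpow_apply_eq_self_of_apply_eq_self hb] at ha
          exact ha hb
        simp only [dif_neg ha, dif_neg hb]
        exact congrArg _ (Subtype.ext hab.cycleOf_eq)
    · intro q1 q2
      refine Quotient.inductionOn₂ q1 q2 fun a b h => ?_
      simp only [Quotient.lift_mk] at h
      by_cases ha : π a = a
      · rw [dif_pos ha] at h
        by_cases hb : π b = b
        · rw [dif_pos hb] at h
          rw [Sum.inl.injEq, Subtype.mk.injEq] at h
          exact Quotient.sound (h ▸ Equiv.Perm.SameCycle.refl _ _)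
        · rw [dif_neg hb] at h; exact absurd h (by simp)
      · rw [dif_neg ha] at h
        by_cases hb : π b = b
        · rw [dif_pos hb] at h; exact absurd h (by simp)
        · rw [dif_neg hb] at h
          rw [Sum.inr.injEq, Subtype.mk.injEq] at h
          refine Quotient.sound (show π.SameCycle a b from ?_)
          by_contra h'
          have h2 := Equiv.Perm.cycleOf_apply π a b
          rw [if_neg h', h, Equiv.Perm.cycleOf_apply_self] at h2
          exact hb h2
    · intro x
      rcases x with ⟨a, ha⟩ | ⟨c, hc⟩
      · exact ⟨Quotient.mk _ a, by simp [dif_pos ha]⟩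
      · obtain ⟨hc1, hc2⟩ := Equiv.Perm.mem_cycleFactorsFinset_iff.1 hc
        obtain ⟨x, hx, -⟩ := hc1
        have hxs : x ∈ c.support := Equiv.Perm.mem_support.2 hx
        have hπx : ¬ π x = x := by rw [← hc2 x hxs]; exact hx
        refine ⟨Quotient.mk _ x, ?_⟩
        simp only [Quotient.lift_mk, dif_neg hπx]
        exact congrArg _ (Subtype.ext (Equiv.Perm.cycle_is_cycleOf hxs hc).symm)
  rw [Nat.card_congr key, Nat.card_sum, Nat.card_eq_fintype_card, Nat.card_eq_fintype_card,
    Fintype.card_subtype, Fintype.card_coe]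
  congr 2
  have h1 := Finset.card_filter_add_card_filter_not (s := (Finset.univ : Finset β))
    (p := fun x => π x = x)
  have h2 : Finset.filter (fun x => ¬ π x = x) Finset.univ = π.support := by
    ext x; simp [Equiv.Perm.mem_support]
  rw [h2, Finset.card_univ] at h1
  omega

lemma sign_term {β : Type} [Fintype β] [DecidableEq β] (π : Equiv.Perm β) :
    ((Equiv.Perm.sign π : ℤ) : ℂ) *
      (-2 : ℂ) ^ ((Fintype.card β - π.support.card) + π.cycleFactorsFinset.card)
      = (-1 : ℂ) ^ (Fintype.card β) *
        2 ^ ((Fintype.card β - π.support.card) + π.cycleFactorsFinset.card) := by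
  have hs : π.support.card ≤ Fintype.card β := by
    rw [← Finset.card_univ]; exact Finset.card_le_univ _
  have hm : Multiset.card π.cycleType = π.cycleFactorsFinset.card := by
    rw [Equiv.Perm.cycleType_def, Multiset.card_map]; rfl
  have hsgn : Equiv.Perm.sign π =
      (-1 : ℤˣ) ^ (π.support.card + π.cycleFactorsFinset.card) := by
    rw [Equiv.Perm.sign_of_cycleType, Equiv.Perm.sum_cycleType, hm]
  rw [hsgn]
  push_cast
  rw [neg_pow (2 : ℂ), ← mul_assoc, ← pow_add]
  congr 1
  rw [show π.support.card + π.cycleFactorsFinset.card +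
      (Fintype.card β - π.support.card + π.cycleFactorsFinset.card)
      = Fintype.card β + 2 * π.cycleFactorsFinset.card from by omega,
    pow_add, pow_mul, neg_one_sq, one_pow, mul_one]

namespace MGraph

open scoped Classical in
lemma witness (k : ℕ) : ∃ (G : MGraph) (U : Finset G.V) (s : {v // v ∈ U} → G.V),
    U.card = k + 1 ∧
    ∑ π : Equiv.Perm {v // v ∈ U}, ((Equiv.Perm.sign π : ℤ) : ℂ) *
      (if (G.addEdges U (s ∘ π)).TwoRegular
        then (-2 : ℂ) ^ (G.addEdges U (s ∘ π)).numComponents else 0) ≠ 0 := by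
  classical
  refine ⟨{ V := Fin (k + 1), E := Empty, ends := fun e => e.elim }, Finset.univ,
    fun u => (u : Fin (k + 1)), by simp, ?_⟩
  set G0 : MGraph := { V := Fin (k + 1), E := Empty, ends := fun e => e.elim } with hG0
  set s : {v // v ∈ (Finset.univ : Finset (Fin (k + 1)))} → Fin (k + 1) :=
    fun u => (u : Fin (k + 1)) with hs
  set e : {v // v ∈ (Finset.univ : Finset (Fin (k + 1)))} ≃ Fin (k + 1) :=
    Equiv.subtypeUnivEquiv (fun x => Finset.mem_univ x) with he
  -- two-regularity
  have hTR : ∀ π : Equiv.Perm {v // v ∈ (Finset.univ : Finset (Fin (k + 1)))},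
      (G0.addEdges Finset.univ (s ∘ π)).TwoRegular := by
    intro π v
    show (∑ e' : Empty ⊕ {v // v ∈ (Finset.univ : Finset (Fin (k + 1)))},
      (G0.addEdges Finset.univ (s ∘ π)).inc v e') = 2
    refine (Fintype.sum_sum_type _).trans ?_
    have h0 : (∑ e' : Empty, (G0.addEdges Finset.univ (s ∘ π)).inc v (Sum.inl e')) = 0 := by
      simp
    have hone : ∀ ρ : Equiv.Perm {v // v ∈ (Finset.univ : Finset (Fin (k + 1)))},
        (∑ u : {v // v ∈ (Finset.univ : Finset (Fin (k + 1)))},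
          if ((ρ u : Fin (k + 1))) = v then (1 : ℕ) else 0) = 1 := by
      intro ρ
      rw [← Equiv.sum_comp (ρ.trans e).symm
        (fun u => if ((ρ u : Fin (k + 1))) = v then (1 : ℕ) else 0)]
      simp [he, Finset.sum_ite_eq']
      exact Finset.card_eq_one.2 ⟨v, by ext x; simp; exact Finset.mem_singleton.symm⟩
    have hplain : (∑ u : {v // v ∈ (Finset.univ : Finset (Fin (k + 1)))},
        if ((u : Fin (k + 1))) = v then (1 : ℕ) else 0) = 1 := by
      rw [← Equiv.sum_comp e.symm
        (fun u => if ((u : Fin (k + 1))) = v then (1 : ℕ) else 0)]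
      simp [he, Finset.sum_ite_eq']
      exact Finset.card_eq_one.2 ⟨v, by ext x; simp; exact Finset.mem_singleton.symm⟩
    have h1 : (∑ u : {v // v ∈ (Finset.univ : Finset (Fin (k + 1)))},
        (G0.addEdges Finset.univ (s ∘ π)).inc v (Sum.inr u)) =
        (∑ u : {v // v ∈ (Finset.univ : Finset (Fin (k + 1)))},
          if ((u : Fin (k + 1))) = v then (1 : ℕ) else 0)
        + (∑ u : {v // v ∈ (Finset.univ : Finset (Fin (k + 1)))},
          if ((π u : Fin (k + 1))) = v then (1 : ℕ) else 0) := by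
      rw [← Finset.sum_add_distrib]
      refine Finset.sum_congr rfl fun u _ => ?_
      simp [inc, addEdges, hs]
    rw [h0, h1, hone π, hplain, zero_add]
  -- components
  have hnum : ∀ π : Equiv.Perm {v // v ∈ (Finset.univ : Finset (Fin (k + 1)))},
      (G0.addEdges Finset.univ (s ∘ π)).numComponents =
        (Fintype.card (Fin (k + 1)) - (e.permCongr π).support.card)
          + (e.permCongr π).cycleFactorsFinset.card := by
    intro π
    have hrel : (fun a b : Fin (k + 1) =>
        ∃ e' : Empty ⊕ {v // v ∈ (Finset.univ : Finset (Fin (k + 1)))},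
          (G0.addEdges Finset.univ (s ∘ π)).ends e' = (a, b) ∨
          (G0.addEdges Finset.univ (s ∘ π)).ends e' = (b, a))
        = (fun a b : Fin (k + 1) => (e.permCongr π) a = b ∨ (e.permCongr π) b = a) := by
      funext a b
      apply propext
      constructor
      · rintro ⟨e', hee⟩
        cases e' with
        | inl e0 => exact e0.elim
        | inr u =>
          rcases hee with hee | hee <;> replace hee := Prod.mk.inj hee <;>
            obtain ⟨h1, h2⟩ := hee
          · left; rw [← h1, ← h2]; rfl
          · right; rw [← h1, ← h2]; rfl
      · rintro (h | h)
        · exact ⟨Sum.inr (e.symm a), Or.inl (Prod.ext rfl h)⟩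
        · exact ⟨Sum.inr (e.symm b), Or.inr (Prod.ext rfl h)⟩
    show Nat.card (Quotient (Relation.EqvGen.setoid
      (fun a b : Fin (k + 1) =>
        ∃ e' : Empty ⊕ {v // v ∈ (Finset.univ : Finset (Fin (k + 1)))},
          (G0.addEdges Finset.univ (s ∘ π)).ends e' = (a, b) ∨
          (G0.addEdges Finset.univ (s ∘ π)).ends e' = (b, a)))) = _
    rw [hrel, orb_count]
  -- assemble
  have hterm : ∀ π : Equiv.Perm {v // v ∈ (Finset.univ : Finset (Fin (k + 1)))},
      ((Equiv.Perm.sign π : ℤ) : ℂ) *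
        (if (G0.addEdges Finset.univ (s ∘ π)).TwoRegular
          then (-2 : ℂ) ^ (G0.addEdges Finset.univ (s ∘ π)).numComponents else 0)
      = (-1 : ℂ) ^ (Fintype.card (Fin (k + 1))) *
        2 ^ ((Fintype.card (Fin (k + 1)) - (e.permCongr π).support.card)
          + (e.permCongr π).cycleFactorsFinset.card) := by
    intro π
    rw [if_pos (hTR π), hnum π, ← Equiv.Perm.sign_permCongr e π]
    exact sign_term (e.permCongr π)
  rw [Finset.sum_congr rfl fun π _ => hterm π, ← Finset.mul_sum]
  apply mul_ne_zero
  · exact pow_ne_zero _ (by norm_num)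
  · have : (∑ π : Equiv.Perm {v // v ∈ (Finset.univ : Finset (Fin (k + 1)))},
        (2 : ℂ) ^ ((Fintype.card (Fin (k + 1)) - (e.permCongr π).support.card)
          + (e.permCongr π).cycleFactorsFinset.card))
        = ((∑ π : Equiv.Perm {v // v ∈ (Finset.univ : Finset (Fin (k + 1)))},
          (2 : ℕ) ^ ((Fintype.card (Fin (k + 1)) - (e.permCongr π).support.card)
            + (e.permCongr π).cycleFactorsFinset.card) : ℕ) : ℂ) := by
      push_cast; rfl
    rw [this]
    rw [Nat.cast_ne_zero]
    have hpos : 0 < ∑ π : Equiv.Perm {v // v ∈ (Finset.univ : Finset (Fin (k + 1)))},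
        (2 : ℕ) ^ ((Fintype.card (Fin (k + 1)) - (e.permCongr π).support.card)
          + (e.permCongr π).cycleFactorsFinset.card) := by
      refine Finset.sum_pos (fun i _ => pow_pos (by norm_num) _) ?_
      exact ⟨1, Finset.mem_univ 1⟩
    omega

end MGraph

open scoped Classical in
/-- the parameter `f(G) = (-2)^{c(G)}` for 2-regular `G` (and `0`
otherwise) is multiplicative with `f(∅) = 1`, but for every `k` it violates the signed
edge-addition condition, hence it is not the partition function of any vertex model. -/
theorem two_regular_counterexample :
    letI f : MGraph → ℂ :=
      fun G => if G.TwoRegular then (-2 : ℂ) ^ G.numComponents else 0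
    (f MGraph.empty = 1 ∧ ∀ G H : MGraph, f (G.disjUnion H) = f G * f H) ∧
    (∀ k : ℕ, ¬ ∃ y : (Fin k → ℕ) → ℂ, ∀ G : MGraph, f G = MGraph.pf k y G) ∧
    ∀ k : ℕ, ∃ (G : MGraph) (U : Finset G.V) (s : {v // v ∈ U} → G.V),
      U.card = k + 1 ∧
      ∑ π : Equiv.Perm {v // v ∈ U},
        ((Equiv.Perm.sign π : ℤ) : ℂ) * f (G.addEdges U (s ∘ π)) ≠ 0 := by
  refine ⟨⟨?_, ?_⟩, ?_, ?_⟩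
  · beta_reduce
    rw [if_pos MGraph.twoRegular_empty, MGraph.numComponents_empty, pow_zero]
  · intro G H
    beta_reduce
    by_cases hG : G.TwoRegular <;> by_cases hH : H.TwoRegular
    · rw [if_pos hG, if_pos hH, if_pos ((MGraph.twoRegular_disjUnion_iff G H).2 ⟨hG, hH⟩),
        MGraph.numComponents_disjUnion, pow_add]
    · rw [if_neg hH, if_neg (fun h => hH ((MGraph.twoRegular_disjUnion_iff G H).1 h).2),
        mul_zero]
    · rw [if_neg hG, if_neg (fun h => hG ((MGraph.twoRegular_disjUnion_iff G H).1 h).1),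
        zero_mul]
    · rw [if_neg hG, if_neg (fun h => hG ((MGraph.twoRegular_disjUnion_iff G H).1 h).1),
        zero_mul]
  · rintro k ⟨y, hy⟩
    obtain ⟨G, U, s, hcard, hne⟩ := MGraph.witness k
    refine hne ?_
    refine Eq.trans (Finset.sum_congr rfl fun π _ => ?_) (MGraph.pf_cancel y G U s ?_)
    · exact congrArg (((Equiv.Perm.sign π : ℤ) : ℂ) * ·) (hy _)
    · rw [hcard]; omega
  · exact MGraph.witness
end

section
/- (Directed-graph necessity.) Let F be a commutative ring, k ∈ N, and y : N^{2k} → F. Define the directed partition function f_y(G) = Σ_{κ:E→[k]} Π_{v∈V} y_{κ(δ^-(v)),κ(δ^+(v))} for a finite directed multigraph G = (V,E). Then f_y is multiplicative, and for every directed graph G = (V,E), every U ⊆ V with |U| = k+1, and every s : U → V, Σ_{π∈S_U} sgn(π) f_y(G_{s∘π}) = 0, where G_t adds the arcs {(u, t(u)) : u ∈ U}. -/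
namespace MGraph

/-- number of arcs entering `v` (second coordinate `v`) of color `c`. -/
def inDegVec (G : MGraph) {k : ℕ} (κ : G.E → Fin k) (v : G.V) : Fin k → ℕ :=
  fun c => ∑ e : G.E, if κ e = c ∧ (G.ends e).2 = v then 1 else 0

/-- number of arcs leaving `v` (first coordinate `v`) of color `c`. -/
def outDegVec (G : MGraph) {k : ℕ} (κ : G.E → Fin k) (v : G.V) : Fin k → ℕ :=
  fun c => ∑ e : G.E, if κ e = c ∧ (G.ends e).1 = v then 1 else 0

/-- the directed partition function of a `2k`-color vertex model `y : ℕ^{2k} → F`,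
where `ℕ^{2k}` is encoded as `(Fin k ⊕ Fin k) → ℕ`, the first block recording the colors
of entering arcs and the second block the colors of leaving arcs. -/
def dpf {F : Type} [CommRing F] (k : ℕ) (y : ((Fin k ⊕ Fin k) → ℕ) → F) (G : MGraph) : F :=
  ∑ κ : G.E → Fin k, ∏ v : G.V, y (Sum.elim (G.inDegVec κ v) (G.outDegVec κ v))

end MGraph

namespace MGraph

section Aux

variable {F : Type} [CommRing F] {k : ℕ}

lemma dpf_empty (y : ((Fin k ⊕ Fin k) → ℕ) → F) : dpf k y empty = 1 := by
  unfold dpf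
  rw [Fintype.sum_eq_single (fun e : MGraph.empty.E => e.elim)
    (fun κ h => absurd (funext fun e => e.elim) h)]
  haveI : IsEmpty MGraph.empty.V := ⟨fun v => Empty.elim v⟩
  exact Finset.prod_of_isEmpty _

lemma inDegVec_disjUnion_inl (G H : MGraph) (κ : (G.disjUnion H).E → Fin k) (v : G.V) :
    (G.disjUnion H).inDegVec κ (Sum.inl v) = G.inDegVec (κ ∘ Sum.inl) v := by
  funext c
  show (∑ e : G.E ⊕ H.E, _) = _
  rw [Fintype.sum_sum_type]
  simp [disjUnion, inDegVec]
  convert rfl <;> rfl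

lemma outDegVec_disjUnion_inl (G H : MGraph) (κ : (G.disjUnion H).E → Fin k) (v : G.V) :
    (G.disjUnion H).outDegVec κ (Sum.inl v) = G.outDegVec (κ ∘ Sum.inl) v := by
  funext c
  show (∑ e : G.E ⊕ H.E, _) = _
  rw [Fintype.sum_sum_type]
  simp [disjUnion, outDegVec]
  convert rfl <;> rfl

lemma inDegVec_disjUnion_inr (G H : MGraph) (κ : (G.disjUnion H).E → Fin k) (v : H.V) :
    (G.disjUnion H).inDegVec κ (Sum.inr v) = H.inDegVec (κ ∘ Sum.inr) v := by
  funext c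
  show (∑ e : G.E ⊕ H.E, _) = _
  rw [Fintype.sum_sum_type]
  simp [disjUnion, inDegVec]
  convert rfl <;> rfl

lemma outDegVec_disjUnion_inr (G H : MGraph) (κ : (G.disjUnion H).E → Fin k) (v : H.V) :
    (G.disjUnion H).outDegVec κ (Sum.inr v) = H.outDegVec (κ ∘ Sum.inr) v := by
  funext c
  show (∑ e : G.E ⊕ H.E, _) = _
  rw [Fintype.sum_sum_type]
  simp [disjUnion, outDegVec]
  convert rfl <;> rfl

lemma dpf_disjUnion (y : ((Fin k ⊕ Fin k) → ℕ) → F) (G H : MGraph) :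
    dpf k y (G.disjUnion H) = dpf k y G * dpf k y H := by
  have h0 : dpf k y (G.disjUnion H) = ∑ κ : (G.E ⊕ H.E) → Fin k, ∏ v : G.V ⊕ H.V,
      y (Sum.elim ((G.disjUnion H).inDegVec κ v) ((G.disjUnion H).outDegVec κ v)) := rfl
  rw [h0, ← Equiv.sum_comp (Equiv.sumArrowEquivProdArrow G.E H.E (Fin k)).symm,
    Fintype.sum_prod_type, dpf, dpf, Finset.sum_mul_sum]
  refine Finset.sum_congr rfl fun κ₁ _ => Finset.sum_congr rfl fun κ₂ _ => ?_
  rw [Fintype.prod_sum_type]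
  have hk : (Equiv.sumArrowEquivProdArrow G.E H.E (Fin k)).symm (κ₁, κ₂)
      = Sum.elim κ₁ κ₂ := rfl
  rw [hk]
  congr 1
  · refine Finset.prod_congr rfl fun v _ => ?_
    erw [inDegVec_disjUnion_inl, outDegVec_disjUnion_inl, Sum.elim_comp_inl]
  · refine Finset.prod_congr rfl fun v _ => ?_
    erw [inDegVec_disjUnion_inr, outDegVec_disjUnion_inr, Sum.elim_comp_inr]

lemma inDegVec_addEdges (G : MGraph) (U : Finset G.V) (t : {v // v ∈ U} → G.V)
    (κ : G.E ⊕ {v // v ∈ U} → Fin k) (w : G.V) (c : Fin k) :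
    (G.addEdges U t).inDegVec κ w c =
      (∑ e : G.E, if κ (Sum.inl e) = c ∧ (G.ends e).2 = w then 1 else 0) +
      (∑ u : {v // v ∈ U}, if κ (Sum.inr u) = c ∧ t u = w then 1 else 0) := by
  show (∑ e : G.E ⊕ {v // v ∈ U}, _) = _
  rw [Fintype.sum_sum_type]
  rfl

lemma outDegVec_addEdges (G : MGraph) (U : Finset G.V) (t : {v // v ∈ U} → G.V)
    (κ : G.E ⊕ {v // v ∈ U} → Fin k) (w : G.V) (c : Fin k) :
    (G.addEdges U t).outDegVec κ w c =
      (∑ e : G.E, if κ (Sum.inl e) = c ∧ (G.ends e).1 = w then 1 else 0) +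
      (∑ u : {v // v ∈ U}, if κ (Sum.inr u) = c ∧ u.1 = w then 1 else 0) := by
  show (∑ e : G.E ⊕ {v // v ∈ U}, _) = _
  rw [Fintype.sum_sum_type]
  rfl

end Aux

end MGraph

/-- the directed partition function is multiplicative, and the signed sum
over arc additions on a set of `k+1` vertices vanishes. Here a directed multigraph is an
`MGraph`, the pair `G.ends e` being read as an arc from its first to its second coordinate,
so that `G.addEdges U t` adds the arcs `(u, t u)` for `u ∈ U`. -/
theorem dpf_multiplicative_and_signed_addArcs_eq_zero
    {F : Type} [CommRing F] (k : ℕ) (y : ((Fin k ⊕ Fin k) → ℕ) → F) :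
    (MGraph.dpf k y MGraph.empty = 1 ∧
      ∀ G H : MGraph, MGraph.dpf k y (G.disjUnion H) = MGraph.dpf k y G * MGraph.dpf k y H) ∧
    ∀ (G : MGraph) (U : Finset G.V), U.card = k + 1 → ∀ s : {v // v ∈ U} → G.V,
      ∑ π : Equiv.Perm {v // v ∈ U},
        ((Equiv.Perm.sign π : ℤ) : F) * MGraph.dpf k y (G.addEdges U (s ∘ π)) = 0 := by
  refine ⟨⟨MGraph.dpf_empty y, MGraph.dpf_disjUnion y⟩, ?_⟩
  intro G U hU s
  have hterm : ∀ π : Equiv.Perm {v // v ∈ U},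
      MGraph.dpf k y (G.addEdges U (s ∘ π)) =
      ∑ κ : G.E ⊕ {v // v ∈ U} → Fin k, ∏ w : G.V,
        y (Sum.elim ((G.addEdges U (s ∘ π)).inDegVec κ w)
          ((G.addEdges U (s ∘ π)).outDegVec κ w)) := fun π => rfl
  simp_rw [hterm, Finset.mul_sum]
  rw [Finset.sum_comm]
  refine Finset.sum_eq_zero fun κ _ => ?_
  have hcard : Fintype.card (Fin k) < Fintype.card {v // v ∈ U} := by
    simp only [Fintype.card_fin, Fintype.card_coe, hU]
    omega
  obtain ⟨u, v, huv, heq⟩ := Fintype.exists_ne_map_eq_of_card_lt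
    (fun x : {v // v ∈ U} => κ (Sum.inr x)) hcard
  set τ := Equiv.swap u v with hτdef
  have hκτ : ∀ x, κ (Sum.inr (τ x)) = κ (Sum.inr x) := by
    intro x
    rcases eq_or_ne x u with rfl | hxu
    · rw [hτdef, Equiv.swap_apply_left]; exact heq.symm
    rcases eq_or_ne x v with rfl | hxv
    · rw [hτdef, Equiv.swap_apply_right]; exact heq
    · rw [hτdef, Equiv.swap_apply_of_ne_of_ne hxu hxv]
  have hτne : τ ≠ 1 := by
    intro h
    apply huv
    have := congrArg (fun σ : Equiv.Perm {v // v ∈ U} => σ u) h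
    simpa [hτdef] using this.symm
  have hprod : ∀ π : Equiv.Perm {v // v ∈ U},
      (∏ w : G.V, y (Sum.elim ((G.addEdges U (s ∘ (π * τ))).inDegVec κ w)
          ((G.addEdges U (s ∘ (π * τ))).outDegVec κ w))) =
      ∏ w : G.V, y (Sum.elim ((G.addEdges U (s ∘ π)).inDegVec κ w)
          ((G.addEdges U (s ∘ π)).outDegVec κ w)) := by
    intro π
    refine Finset.prod_congr rfl fun w _ => ?_
    have hin : (G.addEdges U (s ∘ (π * τ))).inDegVec κ w =
        (G.addEdges U (s ∘ π)).inDegVec κ w := by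
      funext c
      rw [MGraph.inDegVec_addEdges, MGraph.inDegVec_addEdges]
      congr 1
      refine Fintype.sum_equiv τ _ _ fun x => ?_
      rw [hκτ x]
      rfl
    have hout : (G.addEdges U (s ∘ (π * τ))).outDegVec κ w =
        (G.addEdges U (s ∘ π)).outDegVec κ w := by
      funext c
      rw [MGraph.outDegVec_addEdges, MGraph.outDegVec_addEdges]
    rw [hin, hout]
  refine Finset.sum_ninvolution (fun π => π * τ) ?_ ?_ (fun _ => Finset.mem_univ _) ?_
  · intro π
    rw [hprod π]
    have hsgn : ((Equiv.Perm.sign (π * τ) : ℤ) : F) = -((Equiv.Perm.sign π : ℤ) : F) := by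
      rw [map_mul, hτdef, Equiv.Perm.sign_swap huv]
      push_cast
      ring
    rw [hsgn]
    ring
  · intro π _ h
    exact hτne (mul_left_cancel (a := π) (by rw [mul_one]; exact h))
  · intro π
    show π * τ * τ = π
    rw [mul_assoc, hτdef, Equiv.swap_mul_self, mul_one]
end
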